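/- arXiv:1702.07589 — 2 statements merged into one kernel-verified Lean document; each statement's English description precedes it below -/
import Mathlib

section
/- Let G be a map on an orientable surface of genus g with a fixed reference orientation, let F* be the set of counterclockwise facial walks of the dual map G*, and let {B*_1,…,B*_{2g}} be a set of cycles of G* forming a homology-basis. For two flows φ, φ' ∈ ℤ^E of G, the following are equivalent: (1) φ and φ' are homologous; (2) β(φ,W) = β(φ',W) for every closed walk W of G*; (3) β(φ,F) = β(φ',F) for every F ∈ F* and β(φ,B*_i) = β(φ',B*_i) for every 1 ≤ i ≤ 2g. -/
/-
Common combinatorial framework.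

Maps on compact orientable surfaces are formalized as rotation systems
(combinatorial maps): a finite set of darts together with a permutation `σ`
(counterclockwise successor around each vertex) and a fixed-point-free
involution `α` (reversal of darts).  Vertices are the orbits of `σ`, edges the
orbits of `α`, and the (counterclockwise) facial walks are the orbits of
`σ⁻¹ * α`.  The genus is recovered from the Euler characteristic.

Homology of the map is formalized by flows: integer-valued functions on darts;
the subgroup generated by the facial flows plays the role of the boundary
subgroup, two flows being homologous when their difference belongs to it.
Contractibility is formalized combinatorially: null-homotopy of closed walks is
generated by insertion/deletion of spurs and of facial boundaries (and rotation
of the base point).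

Schnyder woods are formalized by their angle labellings (corners ≃ darts, the
corner of dart `d` being the corner between `d` and `σ d` at the tail of `d`);
this follows the paper, where (generalized) Schnyder woods are exactly the
EDGE, ℕ*-VERTEX, ℕ*-FACE angle labellings, and where around an edge `{d, α d}`
the four corners in clockwise order are `d, σ⁻¹ (α d), α d, σ⁻¹ d`.
-/

noncomputable section
open scoped Classical

namespace Schnyder

/-- The setoid whose classes are the orbits (cycles) of a permutation;
for the vertex rotation `σ` the classes are the vertices of the map, for the
edge involution `α` they are the edges, for the face permutation they are the
faces. -/
def permSetoid {X : Type*} (f : Equiv.Perm X) : Setoid X where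
  r := f.SameCycle
  iseqv := ⟨fun x => ⟨0, by simp⟩, fun h => h.symm, fun h h' => h.trans h'⟩

/-- The number of orbits of a permutation. -/
def numOrbits {X : Type*} (f : Equiv.Perm X) : ℕ :=
  Nat.card (Quotient (permSetoid f))

/-- `ccwSector σ x y d` : rotating counterclockwise (iterating `σ`) from the dart
`x`, the dart `d` is met strictly after `x` and before the first occurrence of
`y`; i.e. `d` lies in the counterclockwise sector from `x` to `y` (both
excluded). -/
def ccwSector {X : Type*} (σ : Equiv.Perm X) (x y d : X) : Prop :=
  ∃ k : ℕ, 0 < k ∧ (σ ^ k) x = d ∧ ∀ l : ℕ, 0 < l → l ≤ k → (σ ^ l) x ≠ y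

def cyclicNext {n : ℕ} (h : 0 < n) (k : Fin n) : Fin n :=
  ⟨((k : ℕ) + 1) % n, Nat.mod_lt _ h⟩

def cyclicPrev {n : ℕ} (h : 0 < n) (k : Fin n) : Fin n :=
  ⟨((k : ℕ) + (n - 1)) % n, Nat.mod_lt _ h⟩

/-- The face permutation: its orbits are the (counterclockwise) facial walks of
the map with vertex rotation `σ` and edge involution `α`. -/
def fperm {X : Type*} (σ α : Equiv.Perm X) : Equiv.Perm X := σ⁻¹ * α

/-- A closed walk in the map with vertex rotation `σ` and edge involution `α`:
a cyclic sequence of darts, consecutive darts being chained head-to-tail. -/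
structure CWalk {X : Type*} (σ α : Equiv.Perm X) where
  n : ℕ
  pos : 0 < n
  darts : Fin n → X
  chain : ∀ k : Fin n, σ.SameCycle (α (darts k)) (darts (cyclicNext pos k))

namespace CWalk

variable {X : Type*} {σ α : Equiv.Perm X}

/-- The characteristic flow of a closed walk. -/
def flow (W : CWalk σ α) : X → ℤ := fun d =>
  ∑ k : Fin W.n, ((if W.darts k = d then (1 : ℤ) else 0) - (if W.darts k = α d then 1 else 0))

/-- A closed walk is a cycle when it passes at most once through each vertex. -/
def IsCycle (W : CWalk σ α) : Prop :=
  ∀ k k' : Fin W.n, σ.SameCycle (W.darts k) (W.darts k') → k = k'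

def Mem (W : CWalk σ α) (d : X) : Prop := ∃ k, W.darts k = d

/-- Two closed walks intersect when they share a vertex. -/
def Intersects (W W' : CWalk σ α) : Prop :=
  ∃ k k', σ.SameCycle (W.darts k) (W'.darts k')

/-- `W'` is obtained from `W` by reversing all its edges. -/
def IsReversal (W W' : CWalk σ α) : Prop := ∀ d, W.Mem d ↔ W'.Mem (α d)

/-- Two closed walks use exactly the same darts. -/
def SameSupport (W W' : CWalk σ α) : Prop := ∀ d, W.Mem d ↔ W'.Mem d

/-- Edge-disjointness of two closed walks. -/
def EdgeDisjoint (W W' : CWalk σ α) : Prop :=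
  ∀ d, W.Mem d → ¬ W'.Mem d ∧ ¬ W'.Mem (α d)

/-- The list of darts of a closed walk. -/
def toList (W : CWalk σ α) : List X := List.ofFn W.darts

end CWalk

/-- Two (monochromatic) cycles cross when they intersect and are not reversal
of each other. -/
def CrossingCycles {X : Type*} {σ α : Equiv.Perm X} (W W' : CWalk σ α) : Prop :=
  W.Intersects W' ∧ ¬ W.IsReversal W'

/-- The characteristic flow of the counterclockwise facial walk of the face of
the dart `d0`. -/
def faceFlow {X : Type*} (σ α : Equiv.Perm X) (d0 : X) : X → ℤ := fun d =>
  (if (fperm σ α).SameCycle d0 d then (1 : ℤ) else 0)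
    - (if (fperm σ α).SameCycle d0 (α d) then 1 else 0)

/-- The subgroup `𝔽` of flows generated by the (counterclockwise) facial walks. -/
def facialSubgroup {X : Type*} (σ α : Equiv.Perm X) : AddSubgroup (X → ℤ) :=
  AddSubgroup.closure (Set.range (faceFlow σ α))

/-- Two flows are homologous when their difference belongs to `𝔽`. -/
def Homologous {X : Type*} (σ α : Equiv.Perm X) (f g : X → ℤ) : Prop :=
  f - g ∈ facialSubgroup σ α

/-- Two flows are reversely homologous when their sum belongs to `𝔽`. -/
def ReverselyHomologous {X : Type*} (σ α : Equiv.Perm X) (f g : X → ℤ) : Prop :=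
  f + g ∈ facialSubgroup σ α

/-- Two flows are weakly homologous when they are homologous or reversely
homologous. -/
def WeaklyHomologous {X : Type*} (σ α : Equiv.Perm X) (f g : X → ℤ) : Prop :=
  Homologous σ α f g ∨ ReverselyHomologous σ α f g

/-- Antisymmetric dart functions: the flows `ℤ^E` of the paper (with respect to
the reference orientation given by the darts). -/
def IsFlow {X : Type*} (α : Equiv.Perm X) (f : X → ℤ) : Prop := ∀ d, f (α d) = - f d

/-- A finite family of closed walks is a homology-basis when its classes
generate the first homology group: every closed walk equals, modulo the facial
subgroup, an integer combination of the family. -/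
def IsHomologyBasis {X : Type*} (σ α : Equiv.Perm X) {ι : Type*} [Fintype ι]
    (B : ι → CWalk σ α) : Prop :=
  ∀ W : CWalk σ α, ∃ μ : ι → ℤ, W.flow - ∑ i, μ i • (B i).flow ∈ facialSubgroup σ α

/-- `F` is the complete boundary list of one face (starting anywhere on it). -/
def IsFaceBoundary {X : Type*} (σ α : Equiv.Perm X) (F : List X) : Prop :=
  ∃ (d : X) (k : ℕ), 0 < k ∧ ((fperm σ α) ^ k) d = d ∧
    (∀ i : ℕ, 0 < i → i < k → ((fperm σ α) ^ i) d ≠ d) ∧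
    F = (List.range k).map fun i => ((fperm σ α) ^ i) d

/-- Elementary combinatorial homotopy moves on closed walks: deletion of a
spur, deletion of a facial boundary, rotation of the base point. -/
inductive HomotopyStep {X : Type*} (σ α : Equiv.Perm X) : List X → List X → Prop
  | spur (W₁ W₂ : List X) (d : X) : HomotopyStep σ α (W₁ ++ d :: α d :: W₂) (W₁ ++ W₂)
  | face (W₁ W₂ F : List X) (hF : IsFaceBoundary σ α F) :
      HomotopyStep σ α (W₁ ++ F ++ W₂) (W₁ ++ W₂)
  | rot (d : X) (W : List X) : HomotopyStep σ α (d :: W) (W ++ [d])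

/-- A closed walk (given by its dart list) is contractible when it is
null-homotopic. -/
def NullHomotopic {X : Type*} (σ α : Equiv.Perm X) (W : List X) : Prop :=
  Relation.EqvGen (HomotopyStep σ α) W []

/-! ### Schnyder angle labellings -/

/-- The EDGE pattern on the four corner labels in clockwise order around an
edge: either all four labels are equal (type 0 edge), or they are cyclically
`i-1, i, i, i+1` for some colour `i` (type 1 and type 2 edges). -/
def edgePattern (x : Fin 4 → ZMod 3) : Prop :=
  (∀ k, x k = x 0) ∨
    ∃ (i : ZMod 3) (j : Fin 4), x j = i - 1 ∧ x (j + 1) = i ∧ x (j + 2) = i ∧ x (j + 3) = i + 1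

/-- The EDGE condition at the edge `{d, α d}`: in clockwise order around the
edge, the four incident corners are `d, σ⁻¹ (α d), α d, σ⁻¹ d`. -/
def EdgeCond {X : Type*} (σ α : Equiv.Perm X) (lab : X → ZMod 3) (d : X) : Prop :=
  edgePattern ![lab d, lab (σ⁻¹ (α d)), lab (α d), lab (σ⁻¹ d)]

/-- An EDGE angle labelling (= Schnyder labelling). -/
def IsSchnyderLabeling {X : Type*} (σ α : Equiv.Perm X) (lab : X → ZMod 3) : Prop :=
  ∀ d, EdgeCond σ α lab d

/-- ℕ*-VERTEX (in presence of the EDGE condition): no vertex has all its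
corners of the same colour. -/
def VertexNonconstant {X : Type*} (σ : Equiv.Perm X) (lab : X → ZMod 3) : Prop :=
  ∀ d, ∃ d', σ.SameCycle d d' ∧ lab d' ≠ lab d

/-- ℕ*-FACE (in presence of the EDGE condition): no face has all its corners of
the same colour. -/
def FaceNonconstant {X : Type*} (σ α : Equiv.Perm X) (lab : X → ZMod 3) : Prop :=
  ∀ d, ∃ d', (fperm σ α).SameCycle d d' ∧ lab d' ≠ lab d

/-- A (generalized) Schnyder wood, presented by its angle labelling: an EDGE,
ℕ*-VERTEX, ℕ*-FACE angle labelling (on the torus this is exactly a toroidal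
Schnyder wood). -/
def IsSchnyderWood {X : Type*} (σ α : Equiv.Perm X) (lab : X → ZMod 3) : Prop :=
  IsSchnyderLabeling σ α lab ∧ VertexNonconstant σ lab ∧ FaceNonconstant σ α lab

/-- The dart `d` carries the outgoing direction of colour `i` of its edge:
its two adjacent corners at its tail are labelled `i - 1` (counterclockwise
side) and `i + 1` (clockwise side). -/
def OutDart {X : Type*} (σ : Equiv.Perm X) (lab : X → ZMod 3) (i : ZMod 3) (d : X) : Prop :=
  lab d = i - 1 ∧ lab (σ⁻¹ d) = i + 1

/-- A monochromatic cycle of colour `i` (an `i`-cycle): a directed cycle all of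
whose darts are outgoing of colour `i`. -/
def IsMonoCycle {X : Type*} (σ α : Equiv.Perm X) (lab : X → ZMod 3) (i : ZMod 3)
    (C : CWalk σ α) : Prop :=
  C.IsCycle ∧ ∀ k, OutDart σ lab i (C.darts k)

/-- Half-crossing Schnyder wood: some pair of monochromatic cycles of different
colours cross. -/
def HalfCrossingSW {X : Type*} (σ α : Equiv.Perm X) (lab : X → ZMod 3) : Prop :=
  ∃ (i j : ZMod 3) (C C' : CWalk σ α), i ≠ j ∧ IsMonoCycle σ α lab i C ∧
    IsMonoCycle σ α lab j C' ∧ CrossingCycles C C'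

/-- `i`-crossing Schnyder wood: every `i`-cycle crosses every monochromatic
cycle of any other colour. -/
def ICrossingSW {X : Type*} (σ α : Equiv.Perm X) (lab : X → ZMod 3) (i : ZMod 3) : Prop :=
  ∀ (j : ZMod 3) (C C' : CWalk σ α), j ≠ i → IsMonoCycle σ α lab i C →
    IsMonoCycle σ α lab j C' → CrossingCycles C C'

/-- Intersecting Schnyder wood. -/
def IntersectingSW {X : Type*} (σ α : Equiv.Perm X) (lab : X → ZMod 3) : Prop :=
  ∀ (i : ZMod 3) (C : CWalk σ α), IsMonoCycle σ α lab i C →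
    (∃ C', IsMonoCycle σ α lab (i - 1) C' ∧ C.Intersects C') ∧
    (∃ C', IsMonoCycle σ α lab (i + 1) C' ∧ C.Intersects C')

/-- Crossing Schnyder wood. -/
def CrossingSW {X : Type*} (σ α : Equiv.Perm X) (lab : X → ZMod 3) : Prop :=
  ∀ (i : ZMod 3) (C : CWalk σ α), IsMonoCycle σ α lab i C →
    (∃ C', IsMonoCycle σ α lab (i - 1) C' ∧ CrossingCycles C C') ∧
    (∃ C', IsMonoCycle σ α lab (i + 1) C' ∧ CrossingCycles C C')

/-! ### Combinatorial maps -/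

/-- A map on a compact orientable surface, as a rotation system: finitely many
darts, vertex rotation `σ` (counterclockwise), fixed-point-free edge involution
`α`; connectedness makes the embedding cellular. -/
structure CombMap where
  D : Type
  fin : Fintype D
  σ : Equiv.Perm D
  α : Equiv.Perm D
  α_invol : ∀ d, α (α d) = d
  α_fixfree : ∀ d, α d ≠ d
  connected : ∀ d d', Relation.EqvGen (fun a b => b = σ a ∨ b = α a) d d'

attribute [instance] CombMap.fin

namespace CombMap

variable (M : CombMap)

def facePerm : Equiv.Perm M.D := fperm M.σ M.α

abbrev SameVertex (d d' : M.D) : Prop := M.σ.SameCycle d d'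

abbrev SameFace (d d' : M.D) : Prop := M.facePerm.SameCycle d d'

/-- Closed walks of the (primal) map. -/
abbrev ClosedWalk := CWalk M.σ M.α

/-- Closed walks of the dual map (dual vertices = faces of `M`). -/
abbrev DualClosedWalk := CWalk M.facePerm M.α

/-- Euler characteristic `V - E + F`; it equals `2 - 2g` where `g` is the genus
of the surface. -/
def eulerChar : ℤ :=
  (numOrbits M.σ : ℤ) - (numOrbits M.α : ℤ) + (numOrbits M.facePerm : ℤ)

/-- A closed walk is `0`-homologous; on the torus a cycle is contractible if
and only if its flow is `0`-homologous. -/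
def FlowContractible (W : M.ClosedWalk) : Prop := W.flow ∈ facialSubgroup M.σ M.α

/-- No contractible loop. -/
def NoContractibleLoop : Prop :=
  ∀ d : M.D, M.SameVertex d (M.α d) → ¬ NullHomotopic M.σ M.α [d]

/-- No homotopic multiple edges: two parallel edges never bound a disk. -/
def NoHomotopicMultiEdges : Prop :=
  ∀ d d' : M.D, M.SameVertex d d' → M.SameVertex (M.α d) (M.α d') →
    NullHomotopic M.σ M.α [d, M.α d'] → d' = d ∨ d' = M.α d

/-- A toroidal map: a map on the torus (Euler characteristic 0) without
contractible loop nor homotopic multiple edges. -/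
def IsToroidal : Prop := M.eulerChar = 0 ∧ M.NoContractibleLoop ∧ M.NoHomotopicMultiEdges

/-- A triangulation: every face has size three. -/
def IsTriangulation : Prop := ∀ d, (M.facePerm ^ 3) d = d ∧ M.facePerm d ≠ d

/-- A simple map: no loops and no multiple edges. -/
def Simple : Prop :=
  (∀ d : M.D, ¬ M.SameVertex d (M.α d)) ∧
    ∀ d d' : M.D, M.SameVertex d d' → M.SameVertex (M.α d) (M.α d') → d' = d ∨ d' = M.α d

/-- The pairing between a flow of `M` and a flow of its dual (the dual dart of
a dart being itself); this is twice the `β` of the paper, which is harmless. -/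
def beta (p q : M.D → ℤ) : ℤ := ∑ d : M.D, p d * q d

/-- The characteristic flow of an oriented subgraph given by a set of darts. -/
def setFlow (S : Set M.D) : M.D → ℤ := fun d =>
  (if d ∈ S then (1 : ℤ) else 0) - (if M.α d ∈ S then 1 else 0)

/-- The darts that are outgoing (in some colour) in a Schnyder wood: the
orientation of the map associated with the Schnyder wood. -/
def outSet (lab : M.D → ZMod 3) : Set M.D := {d | ∃ i, OutDart M.σ lab i d}

/-- The angle labelling of the dual Schnyder wood (the corner of the dual dart
`d` is the corner of `M` labelled by `facePerm d`). -/
def dualLab (lab : M.D → ZMod 3) : M.D → ZMod 3 := fun d => lab (M.facePerm d)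

/-! #### The primal–dual completion `Ĝ` and its orientations

The edges of `Ĝ` are indexed by `M.D × Bool` : `(d, false)` joins the tail
vertex of `d` to the edge-vertex of the edge of `d`, and `(d, true)` joins the
face on the left of `d` to this edge-vertex.  An orientation of `Ĝ` assigns
`true` to an edge when it is oriented from the primal/dual vertex towards the
edge-vertex (an "out-edge"). -/

/-- The orientation of `Ĝ` associated with an angle labelling: an edge of `Ĝ`
is an out-edge exactly when, crossing it counterclockwise around its
primal/dual vertex, the corner label increases by one. -/
def labOrientation (lab : M.D → ZMod 3) : M.D × Bool → Bool := fun x =>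
  if x.2 = false then (if lab x.1 = lab (M.σ⁻¹ x.1) + 1 then true else false)
  else (if lab (M.facePerm x.1) = lab x.1 + 1 then true else false)

/-- A Schnyder orientation of `Ĝ`: an orientation corresponding to a Schnyder
(EDGE) labelling of `M`. -/
def IsSchnyderOrientation (o : M.D × Bool → Bool) : Prop :=
  ∃ lab : M.D → ZMod 3, IsSchnyderLabeling M.σ M.α lab ∧ o = M.labOrientation lab

def outdegPrimal (o : M.D × Bool → Bool) (d0 : M.D) : ℕ :=
  Nat.card {d : M.D // M.SameVertex d0 d ∧ o (d, false) = true}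

def outdegDual (o : M.D × Bool → Bool) (d0 : M.D) : ℕ :=
  Nat.card {d : M.D // M.SameFace d0 d ∧ o (d, true) = true}

def outdegEdge (o : M.D × Bool → Bool) (d0 : M.D) : ℕ :=
  (if o (d0, false) = false then 1 else 0) + (if o (M.α d0, false) = false then 1 else 0) +
    (if o (d0, true) = false then 1 else 0) + (if o (M.α d0, true) = false then 1 else 0)

/-- A `mod₃`-orientation of `Ĝ`: primal- and dual-vertices have outdegree
divisible by 3, edge-vertices have outdegree `1 mod 3`. -/
def IsMod3Orientation (o : M.D × Bool → Bool) : Prop :=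
  (∀ d0, 3 ∣ M.outdegPrimal o d0) ∧ (∀ d0, 3 ∣ M.outdegDual o d0) ∧
    ∀ d0, M.outdegEdge o d0 % 3 = 1

/-- `γ(C)` for a cycle `C` of `M`: the number of edges of `Ĝ` leaving `Ĉ` on
its right minus the number of edges of `Ĝ` leaving `Ĉ` on its left. -/
def gammaPDC (o : M.D × Bool → Bool) (C : M.ClosedWalk) : ℤ :=
  (∑ k : Fin C.n, ∑ d : M.D,
      ((if ccwSector M.σ (M.α (C.darts (cyclicPrev C.pos k))) (C.darts k) d ∧
            o (d, false) = true then (1 : ℤ) else 0) -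
        (if ccwSector M.σ (C.darts k) (M.α (C.darts (cyclicPrev C.pos k))) d ∧
            o (d, false) = true then 1 else 0))) +
    ∑ k : Fin C.n,
      ((if o (M.α (C.darts k), true) = false then (1 : ℤ) else 0) -
        (if o (C.darts k, true) = false then 1 else 0))

/-- A Schnyder wood is balanced when `γ(C) = 0` for every non-contractible
cycle `C` of the map. -/
def BalancedLab (lab : M.D → ZMod 3) : Prop :=
  ∀ C : M.ClosedWalk, C.IsCycle → ¬ M.FlowContractible C →
    M.gammaPDC (M.labOrientation lab) C = 0

/-- `γ(C)` with respect to an orientation of the edges of `M` itself (the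
simplified form of `γ` for triangulations): number of edges of `M` leaving `C`
on its right minus the number leaving `C` on its left. -/
def gammaSet (A : Set M.D) (C : M.ClosedWalk) : ℤ :=
  ∑ k : Fin C.n, ∑ d : M.D,
    ((if ccwSector M.σ (M.α (C.darts (cyclicPrev C.pos k))) (C.darts k) d ∧ d ∈ A
        then (1 : ℤ) else 0) -
      (if ccwSector M.σ (C.darts k) (M.α (C.darts (cyclicPrev C.pos k))) d ∧ d ∈ A
        then 1 else 0))

/-- Balanced Schnyder wood of a toroidal triangulation (via the simplified
`γ` on the edges of `M`). -/
def BalancedTri (lab : M.D → ZMod 3) : Prop :=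
  ∀ C : M.ClosedWalk, C.IsCycle → ¬ M.FlowContractible C →
    M.gammaSet (M.outSet lab) C = 0

/-! #### Orientations of the map itself -/

/-- An orientation of the edges of `M` (one dart chosen per edge). -/
def IsOrientation (A : Set M.D) : Prop := ∀ d, d ∈ A ↔ M.α d ∉ A

/-- The characteristic flow of `D \ D'` for two orientations `A, A'`. -/
def orientDiffFlow (A A' : Set M.D) : M.D → ℤ := fun d =>
  if d ∈ A ∧ d ∉ A' then 1 else if d ∉ A ∧ d ∈ A' then -1 else 0

/-- A `0`-homologous flow is counterclockwise with respect to the face `f0`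
(given by one of its darts) when it is a combination with nonnegative
coefficients of the facial flows of the faces different from `f0`. -/
def CCWFlow (f0 : M.D) (t : M.D → ℤ) : Prop :=
  ∃ c : M.D → ℕ, (∀ d, M.SameFace d f0 → c d = 0) ∧
    t = ∑ d : M.D, (c d : ℤ) • faceFlow M.σ M.α d

def outAt (A : Set M.D) (d0 : M.D) : ℕ :=
  Nat.card {d : M.D // M.SameVertex d0 d ∧ d ∈ A}

/-- A 3-orientation: every vertex has outdegree exactly 3. -/
def IsThreeOrientation (A : Set M.D) : Prop :=
  M.IsOrientation A ∧ ∀ d0, M.outAt A d0 = 3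

/-! #### Middle walks and middle cycles -/

/-- In a 3-orientation `A`, `b` is the middle outgoing edge after `d`: it
leaves the head of `d`, with exactly one outgoing dart strictly on each side of
the path `d, b`. -/
def IsMiddleSucc (A : Set M.D) (d b : M.D) : Prop :=
  b ∈ A ∧ M.σ.SameCycle (M.α d) b ∧
    Nat.card {x : M.D // x ∈ A ∧ ccwSector M.σ (M.α d) b x} = 1 ∧
    Nat.card {x : M.D // x ∈ A ∧ ccwSector M.σ b (M.α d) x} = 1

/-- The middle walk: an infinite sequence of darts, each followed by the middle
outgoing edge at its head. -/
def IsMiddleWalk (A : Set M.D) (w : ℕ → M.D) : Prop :=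
  w 0 ∈ A ∧ ∀ n, M.IsMiddleSucc A (w n) (w (n + 1))

/-- A middle cycle: a directed cycle such that every vertex on it has exactly
one edge leaving on the left of the cycle (and hence exactly one on the
right). -/
def IsMiddleCycle (A : Set M.D) (C : M.ClosedWalk) : Prop :=
  C.IsCycle ∧ (∀ k, C.darts k ∈ A) ∧
    ∀ k, Nat.card {x : M.D // x ∈ A ∧
        ccwSector M.σ (C.darts (cyclicNext C.pos k)) (M.α (C.darts k)) x} = 1 ∧
      Nat.card {x : M.D // x ∈ A ∧
        ccwSector M.σ (M.α (C.darts k)) (C.darts (cyclicNext C.pos k)) x} = 1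

end CombMap

/-! ### Universal covers -/

/-- A universal cover of the map `M`: a connected, simply connected covering of
(maps given by) rotation systems.  `p` commutes with the rotations, is a local
bijection on vertices, the cover is connected, and every closed walk of the
cover is null-homotopic (simple connectivity). -/
structure UniversalCover (M : CombMap) where
  Dc : Type
  σ' : Equiv.Perm Dc
  α' : Equiv.Perm Dc
  α'_invol : ∀ x, α' (α' x) = x
  p : Dc → M.D
  p_surj : Function.Surjective p
  p_σ : ∀ x, p (σ' x) = M.σ (p x)
  p_α : ∀ x, p (α' x) = M.α (p x)
  locInj : ∀ x y, σ'.SameCycle x y → p x = p y → x = y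
  connected : ∀ x y, Relation.EqvGen (fun a b => b = σ' a ∨ b = α' a) x y
  simplyConnected : ∀ W : CWalk σ' α', NullHomotopic σ' α' W.toList

/-- A set of darts closed under the vertex rotation: a set of vertices. -/
def VertexClosed {X : Type*} (σ : Equiv.Perm X) (A : Set X) : Prop :=
  ∀ x y, σ.SameCycle x y → (x ∈ A ↔ y ∈ A)

/-- The set of darts meets at most two vertices. -/
def AtMostTwoVertexClasses {X : Type*} (σ : Equiv.Perm X) (A : Set X) : Prop :=
  ∃ a b : X, ∀ x ∈ A, σ.SameCycle x a ∨ σ.SameCycle x b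

/-- Reachability in the graph of the map avoiding the vertices of `A`. -/
def ReachAvoiding {X : Type*} (σ α : Equiv.Perm X) (A : Set X) : X → X → Prop :=
  Relation.EqvGen fun u v => u ∉ A ∧ v ∉ A ∧ (v = σ u ∨ v = α u)

/-- 3-connectivity of the graph of a (possibly infinite) rotation system: at
least four vertices, and removing any (at most) two vertices leaves it
connected. -/
def ThreeConnectedMap {X : Type*} (σ α : Equiv.Perm X) : Prop :=
  (∃ a b c d : X, ¬σ.SameCycle a b ∧ ¬σ.SameCycle a c ∧ ¬σ.SameCycle a d ∧
      ¬σ.SameCycle b c ∧ ¬σ.SameCycle b d ∧ ¬σ.SameCycle c d) ∧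
    ∀ A : Set X, VertexClosed σ A → AtMostTwoVertexClasses σ A →
      ∀ x y, x ∉ A → y ∉ A → ReachAvoiding σ α A x y

/-- A map is essentially 3-connected when its universal cover is 3-connected. -/
def CombMap.EssentiallyThreeConnected (M : CombMap) : Prop :=
  ∀ U : UniversalCover M, ThreeConnectedMap U.σ' U.α'

/-! ### Miscellaneous helpers -/

/-- The order relation of a distributive lattice structure. -/
def distribLE {T : Type*} (inst : DistribLattice T) : T → T → Prop :=
  (inst.toLattice.toSemilatticeSup.toPartialOrder.toPreorder.toLE).le

/-- The strict order relation of a linear order structure. -/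
def linLT {T : Type*} (L : LinearOrder T) : T → T → Prop :=
  (L.toPartialOrder.toPreorder.toLT).lt

/-- A basic toroidal map: a non-contractible cycle on `n + 1` vertices together
with `n + 1` homologous non-contractible loops, one at each vertex.  Around the
vertex `x`, the counterclockwise order of the darts is: `(x,0)` towards the
next vertex on the cycle, `(x,1)` the loop leaving, `(x,2)` towards the
previous vertex, `(x,3)` the loop returning. -/
def CombMap.IsBasic (M : CombMap) : Prop :=
  ∃ (n : ℕ) (e : M.D ≃ ZMod (n + 1) × Fin 4),
    (∀ (x : ZMod (n + 1)) (j : Fin 4), e (M.σ (e.symm (x, j))) = (x, j + 1)) ∧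
      ∀ x : ZMod (n + 1),
        e (M.α (e.symm (x, 0))) = (x + 1, 2) ∧
        e (M.α (e.symm (x, 2))) = (x - 1, 0) ∧
        e (M.α (e.symm (x, 1))) = (x, 3) ∧
        e (M.α (e.symm (x, 3))) = (x, 1)


section StatementTwoAux

variable {M : CombMap}

private lemma sameFace_refl (x : M.D) : M.SameFace x x := ⟨0, by simp⟩

private lemma alpha_alpha (d : M.D) : M.α (M.α d) = d := M.α_invol d

private lemma fperm_eq_facePerm : fperm M.σ M.α = M.facePerm := rfl

private lemma facePerm_fpermDual (d : M.D) :
    M.facePerm (fperm M.facePerm M.α d) = M.α d := by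
  simp [fperm]

private lemma alpha_facePermInv (d : M.D) : M.α (M.facePerm⁻¹ d) = M.σ d := by
  simp [CombMap.facePerm, fperm, mul_inv_rev]

/-! beta linearity -/

private lemma beta_zero_left (q : M.D → ℤ) : M.beta 0 q = 0 := by
  simp [CombMap.beta]

private lemma beta_zero_right (p : M.D → ℤ) : M.beta p 0 = 0 := by
  simp [CombMap.beta]

private lemma beta_add_left (p p' q : M.D → ℤ) :
    M.beta (p + p') q = M.beta p q + M.beta p' q := by
  simp [CombMap.beta, add_mul, Finset.sum_add_distrib]

private lemma beta_add_right (p q q' : M.D → ℤ) :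
    M.beta p (q + q') = M.beta p q + M.beta p q' := by
  simp [CombMap.beta, mul_add, Finset.sum_add_distrib]

private lemma beta_neg_left (p q : M.D → ℤ) : M.beta (-p) q = - M.beta p q := by
  simp [CombMap.beta]

private lemma beta_neg_right (p q : M.D → ℤ) : M.beta p (-q) = - M.beta p q := by
  simp [CombMap.beta]

private lemma beta_sub_left (p p' q : M.D → ℤ) :
    M.beta (p - p') q = M.beta p q - M.beta p' q := by
  simp [CombMap.beta, sub_mul, Finset.sum_sub_distrib]

private lemma beta_sum_smul_right {ι : Type*} [Fintype ι] (p : M.D → ℤ)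
    (μ : ι → ℤ) (q : ι → M.D → ℤ) :
    M.beta p (∑ i, μ i • q i) = ∑ i, μ i * M.beta p (q i) := by
  unfold CombMap.beta
  have h1 : ∀ d : M.D, p d * (∑ i, μ i • q i) d = ∑ i, μ i * (p d * q i d) := by
    intro d
    rw [Finset.sum_apply, Finset.mul_sum]
    refine Finset.sum_congr rfl fun i _ => ?_
    simp [smul_eq_mul]; ring
  have h2 : ∀ i, μ i * (∑ d, p d * q i d) = ∑ d, μ i * (p d * q i d) := by
    intro i; rw [Finset.mul_sum]
  simp only [h1, h2]
  exact Finset.sum_comm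

/-! beta and walk flows -/

private lemma cyclicNext_bijective {n : ℕ} (h : 0 < n) :
    Function.Bijective (cyclicNext h) := by
  rw [Fintype.bijective_iff_injective_and_card]
  refine ⟨?_, rfl⟩
  intro a b hab
  have h1 : ((a : ℕ) + 1) % n = ((b : ℕ) + 1) % n := congrArg Fin.val hab
  have ha := a.isLt; have hb := b.isLt
  have key : ∀ x : ℕ, x < n → (x + 1) % n = if x + 1 = n then 0 else x + 1 := by
    intro x hx
    split
    · next hxx => rw [hxx, Nat.mod_self]
    · next hxx => exact Nat.mod_eq_of_lt (by omega)
  rw [key _ ha, key _ hb] at h1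
  apply Fin.ext
  split_ifs at h1 <;> omega

private lemma beta_flow_eq (p : M.D → ℤ) (hp : IsFlow M.α p) (W : CWalk M.facePerm M.α) :
    M.beta p W.flow = 2 * ∑ k : Fin W.n, p (W.darts k) := by
  unfold CombMap.beta CWalk.flow
  have hstep : ∀ d, p d * (∑ k : Fin W.n,
      ((if W.darts k = d then (1:ℤ) else 0) - if W.darts k = M.α d then 1 else 0))
      = ∑ k : Fin W.n, (p d * (if W.darts k = d then (1:ℤ) else 0)
          - p d * (if W.darts k = M.α d then 1 else 0)) := by
    intro d; rw [Finset.mul_sum]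
    refine Finset.sum_congr rfl fun k _ => ?_; ring
  simp only [hstep]
  rw [Finset.sum_comm]
  have h2 : ∀ k : Fin W.n, ∑ d : M.D,
      (p d * (if W.darts k = d then (1:ℤ) else 0)
        - p d * (if W.darts k = M.α d then 1 else 0)) = 2 * p (W.darts k) := by
    intro k
    rw [Finset.sum_sub_distrib]
    have e1 : ∑ d : M.D, p d * (if W.darts k = d then (1:ℤ) else 0) = p (W.darts k) := by
      simp [mul_ite]
    have hiff : ∀ d : M.D, (W.darts k = M.α d) = (M.α (W.darts k) = d) := by
      intro d; apply propext; constructor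
      · intro h; rw [h, alpha_alpha]
      · intro h; rw [← h, alpha_alpha]
    have e2 : ∑ d : M.D, p d * (if W.darts k = M.α d then (1:ℤ) else 0)
        = p (M.α (W.darts k)) := by
      simp only [hiff]
      simp [mul_ite]
    rw [e1, e2, hp]; ring
  rw [Finset.sum_congr rfl (fun k _ => h2 k), ← Finset.mul_sum]

private lemma faceFlow_isFlow (d0 : M.D) : IsFlow M.α (faceFlow M.σ M.α d0) := by
  intro d
  simp only [faceFlow, alpha_alpha]
  ring

private lemma sum_faceFlow_walk (d0 : M.D) (W : CWalk M.facePerm M.α) :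
    ∑ k : Fin W.n, faceFlow M.σ M.α d0 (W.darts k) = 0 := by
  have hchain : ∀ k, ((fperm M.σ M.α).SameCycle d0 (M.α (W.darts k)))
      = ((fperm M.σ M.α).SameCycle d0 (W.darts (cyclicNext W.pos k))) := by
    intro k
    apply propext
    rw [fperm_eq_facePerm]
    exact ⟨fun h => h.trans (W.chain k), fun h => h.trans (W.chain k).symm⟩
  have hterm : ∀ k, faceFlow M.σ M.α d0 (W.darts k)
      = (if (fperm M.σ M.α).SameCycle d0 (W.darts k) then (1:ℤ) else 0)
        - (if (fperm M.σ M.α).SameCycle d0 (W.darts (cyclicNext W.pos k)) then 1 else 0) := by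
    intro k
    have hk := iff_of_eq (hchain k)
    unfold faceFlow
    split_ifs <;> first | rfl | tauto
  rw [Finset.sum_congr rfl (fun k _ => hterm k), Finset.sum_sub_distrib]
  rw [Function.Bijective.sum_comp (cyclicNext_bijective W.pos)
    (fun k => if (fperm M.σ M.α).SameCycle d0 (W.darts k) then (1:ℤ) else 0)]
  exact sub_self _

private lemma beta_faceFlow_walk (d0 : M.D) (W : CWalk M.facePerm M.α) :
    M.beta (faceFlow M.σ M.α d0) W.flow = 0 := by
  rw [beta_flow_eq _ (faceFlow_isFlow d0) W, sum_faceFlow_walk]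
  ring

private lemma beta_facial_walk :
    ∀ x ∈ facialSubgroup M.σ M.α, ∀ W : CWalk M.facePerm M.α, M.beta x W.flow = 0 := by
  intro x hx
  have hx' : x ∈ AddSubgroup.closure (Set.range (faceFlow M.σ M.α)) := hx
  clear hx
  induction hx' using AddSubgroup.closure_induction with
  | mem y hy =>
    obtain ⟨d0, rfl⟩ := hy
    exact fun W => beta_faceFlow_walk d0 W
  | zero => exact fun W => beta_zero_left _
  | add a b _ _ ha hb => intro W; rw [beta_add_left, ha W, hb W]; ring
  | neg a _ ha => intro W; rw [beta_neg_left, ha W]; ring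

private lemma beta_faceFlow_dualFaceFlow (a b : M.D) :
    M.beta (faceFlow M.σ M.α a) (faceFlow M.facePerm M.α b) = 0 := by
  classical
  set G := fperm M.facePerm M.α with hG
  set Ia : M.D → ℤ := fun d => if M.facePerm.SameCycle a d then 1 else 0 with hIa
  set Ib : M.D → ℤ := fun d => if G.SameCycle b d then 1 else 0 with hIb
  have hA : ∀ d, faceFlow M.σ M.α a d = Ia d - Ia (M.α d) := by
    intro d
    simp only [hIa]
    unfold faceFlow
    simp only [fperm_eq_facePerm]
    by_cases h1 : M.facePerm.SameCycle a d <;> by_cases h2 : M.facePerm.SameCycle a (M.α d) <;> simp [h1, h2]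
  have hBB : ∀ d, faceFlow M.facePerm M.α b d = Ib d - Ib (M.α d) := by
    intro d
    simp only [hIb, hG]
    unfold faceFlow
    split_ifs <;> first | rfl | tauto
  have key1 : ∀ d, Ia (M.α d) = Ia (G d) := by
    intro d
    have h : M.α d = M.facePerm (G d) := (facePerm_fpermDual d).symm
    rw [hIa]
    simp only [h, Equiv.Perm.sameCycle_apply_right]
  have key2 : ∀ d, Ib (G d) = Ib d := by
    intro d; simp only [hIb, Equiv.Perm.sameCycle_apply_right]
  have T3 : ∑ d, Ia (M.α d) * Ib d = ∑ d, Ia d * Ib d := by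
    calc ∑ d, Ia (M.α d) * Ib d = ∑ d, Ia (G d) * Ib (G d) := by
          simp only [key1, key2]
      _ = ∑ d, Ia d * Ib d := Equiv.sum_comp G (fun d => Ia d * Ib d)
  have T2 : ∑ d, Ia d * Ib (M.α d) = ∑ d, Ia (M.α d) * Ib d := by
    calc ∑ d, Ia d * Ib (M.α d)
        = ∑ d, Ia (M.α d) * Ib (M.α (M.α d)) :=
          (Equiv.sum_comp M.α (fun d => Ia d * Ib (M.α d))).symm
      _ = ∑ d, Ia (M.α d) * Ib d := by simp only [alpha_alpha]
  have T4 : ∑ d, Ia (M.α d) * Ib (M.α d) = ∑ d, Ia d * Ib d :=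
    Equiv.sum_comp M.α (fun d => Ia d * Ib d)
  unfold CombMap.beta
  simp only [hA, hBB, sub_mul, mul_sub]
  rw [Finset.sum_sub_distrib, Finset.sum_sub_distrib, Finset.sum_sub_distrib]
  linarith [T2, T3, T4]

end StatementTwoAux

/-! ### Dual paths -/

inductive DPath (M : CombMap) : M.D → M.D → List M.D → Prop
  | nil {a b : M.D} : M.SameFace a b → DPath M a b []
  | cons {a b d : M.D} {L : List M.D} :
      M.SameFace a d → DPath M (M.α d) b L → DPath M a b (d :: L)

namespace DPath

variable {M : CombMap}

lemma of_nil {a b : M.D} (h : DPath M a b []) : M.SameFace a b := by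
  cases h with | nil h => exact h

lemma head_face {a b d : M.D} {L : List M.D} (h : DPath M a b (d :: L)) :
    M.SameFace a d := by
  cases h with | cons h _ => exact h

lemma tail_path {a b d : M.D} {L : List M.D} (h : DPath M a b (d :: L)) :
    DPath M (M.α d) b L := by
  cases h with | cons _ h => exact h

lemma congr_right {a b b' : M.D} {L : List M.D} (h : DPath M a b L)
    (hbb : M.SameFace b b') : DPath M a b' L := by
  induction h with
  | nil h => exact nil (h.trans hbb)
  | cons h hp ih => exact cons h (ih hbb)

lemma congr_left {a a' b : M.D} {L : List M.D} (haa : M.SameFace a' a)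
    (h : DPath M a b L) : DPath M a' b L := by
  cases h with
  | nil h => exact nil (haa.trans h)
  | cons h hp => exact cons (haa.trans h) hp

lemma append {a b c : M.D} {L L' : List M.D} (h : DPath M a b L)
    (h' : DPath M b c L') : DPath M a c (L ++ L') := by
  induction h with
  | nil h => simpa using congr_left h h'
  | cons h hp ih => exact cons h (ih h')

lemma snoc {a b d : M.D} {L : List M.D} (h : DPath M a b L)
    (hbd : M.SameFace b d) : DPath M a (M.α d) (L ++ [d]) := by
  induction h with
  | nil h => exact cons (h.trans hbd) (nil (sameFace_refl _))
  | cons h hp ih => exact cons h (ih hbd)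

lemma reverse {a b : M.D} {L : List M.D} (h : DPath M a b L) :
    DPath M b a (L.reverse.map M.α) := by
  induction h with
  | nil h => simpa using nil h.symm
  | cons h hp ih =>
    have h2 := ih.snoc (sameFace_refl (M.α _))
    rw [alpha_alpha] at h2
    have h3 := h2.congr_right h.symm
    simpa using h3

lemma exists_dpath (M : CombMap) (a b : M.D) : ∃ L, DPath M a b L := by
  have h := M.connected a b
  induction h with
  | rel x y hxy =>
    rcases hxy with h | h
    · subst h
      refine ⟨[M.facePerm⁻¹ x], cons ?_ (nil ?_)⟩
      · exact Equiv.Perm.sameCycle_symm_apply_right.mpr (sameFace_refl x)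
      · rw [alpha_facePermInv]
    · subst h
      exact ⟨[x], cons (sameFace_refl _) (nil (sameFace_refl _))⟩
  | refl x => exact ⟨[], nil (sameFace_refl _)⟩
  | symm x y _ ih =>
    obtain ⟨L, hL⟩ := ih
    exact ⟨_, hL.reverse⟩
  | trans x y z _ _ ih ih' =>
    obtain ⟨L, hL⟩ := ih
    obtain ⟨L', hL'⟩ := ih'
    exact ⟨_, hL.append hL'⟩

lemma chain'_of {L : List M.D} :
    ∀ {a b : M.D}, DPath M a b L →
      List.Chain' (fun d d' => M.SameFace (M.α d) d') L := by
  induction L with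
  | nil => intro a b _; exact List.isChain_nil
  | cons d L ih =>
    intro a b h
    have hp := h.tail_path
    rw [List.Chain', List.isChain_cons]
    refine ⟨?_, ih hp⟩
    intro y hy
    cases L with
    | nil => simp at hy
    | cons d' L' =>
      simp only [List.head?_cons, Option.mem_def, Option.some.injEq] at hy
      subst hy
      exact hp.head_face

lemma last_of {L : List M.D} :
    ∀ {a b : M.D}, DPath M a b L → ∀ (hne : L ≠ []),
      M.SameFace (M.α (L.getLast hne)) b := by
  induction L with
  | nil => intro a b _ hne; exact absurd rfl hne
  | cons d L ih =>
    intro a b h hne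
    cases L with
    | nil => simpa using h.tail_path.of_nil
    | cons d' L' =>
      rw [List.getLast_cons (by simp)]
      exact ih h.tail_path _

end DPath

section StatementTwoMain

variable {M : CombMap}

private lemma sum_fin_list (f : M.D → ℤ) (L : List M.D) :
    ∑ k : Fin L.length, f (L.get k) = (L.map f).sum := by
  induction L with
  | nil => simp
  | cons d L ih =>
    simp only [List.length_cons]
    rw [Fin.sum_univ_succ]
    simp [ih]

private lemma closed_sum_zero (ψ : M.D → ℤ)
    (hT : ∀ W : CWalk M.facePerm M.α, ∑ k : Fin W.n, ψ (W.darts k) = 0)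
    {a : M.D} {L : List M.D} (h : DPath M a a L) : (L.map ψ).sum = 0 := by
  rcases L with _ | ⟨d, L0⟩
  · simp
  set LL := d :: L0 with hLL
  have hpos : 0 < LL.length := by simp [hLL]
  have hchain : ∀ k : Fin LL.length,
      M.facePerm.SameCycle (M.α (LL.get k)) (LL.get (cyclicNext hpos k)) := by
    intro k
    rcases Nat.lt_or_ge ((k : ℕ) + 1) LL.length with hk | hk
    · have hnext : cyclicNext hpos k = ⟨(k : ℕ) + 1, hk⟩ := by
        simp [cyclicNext, Nat.mod_eq_of_lt hk]
      rw [hnext]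
      have hc := (List.isChain_iff_getElem.mp h.chain'_of) (k : ℕ) (by omega)
      convert hc using 3 <;> simp [List.get_eq_getElem]
    · have hk2 : (k : ℕ) + 1 = LL.length := by omega
      have hnext : cyclicNext hpos k = ⟨0, hpos⟩ := by
        simp [cyclicNext, hk2]
      rw [hnext]
      have hlast := h.last_of (by simp [hLL])
      have hhead : M.SameFace a (LL.get ⟨0, hpos⟩) := by
        have := h.head_face
        simpa [hLL] using this
      have hgl : LL.getLast (by simp [hLL]) = LL.get k := by
        rw [List.getLast_eq_getElem, List.get_eq_getElem]
        congr 1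
        omega
      rw [hgl] at hlast
      exact hlast.trans hhead
  have hW := hT ⟨LL.length, hpos, fun k => LL.get k, hchain⟩
  rw [← sum_fin_list]
  exact hW

private lemma sum_map_neg (ψ : M.D → ℤ) (hψ : IsFlow M.α ψ) (L : List M.D) :
    ((L.map M.α).map ψ).sum = -(L.map ψ).sum := by
  induction L with
  | nil => simp
  | cons d L ih =>
    simp only [List.map_cons, List.sum_cons, hψ d, ih]
    ring

private lemma gain_unique (ψ : M.D → ℤ) (hψ : IsFlow M.α ψ)
    (hT : ∀ W : CWalk M.facePerm M.α, ∑ k : Fin W.n, ψ (W.darts k) = 0)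
    {a b : M.D} {L L' : List M.D} (h : DPath M a b L) (h' : DPath M a b L') :
    (L.map ψ).sum = (L'.map ψ).sum := by
  have hc := h.append h'.reverse
  have h0 := closed_sum_zero ψ hT hc
  rw [List.map_append, List.sum_append] at h0
  have h2 : ((L'.reverse.map M.α).map ψ).sum = -(L'.map ψ).sum := by
    rw [sum_map_neg ψ hψ L'.reverse, List.map_reverse, List.sum_reverse]
  rw [h2] at h0
  linarith

private lemma mem_facial_of_tension (ψ : M.D → ℤ) (hψ : IsFlow M.α ψ)
    (hT : ∀ W : CWalk M.facePerm M.α, ∑ k : Fin W.n, ψ (W.darts k) = 0) :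
    ψ ∈ facialSubgroup M.σ M.α := by
  by_cases hD : Nonempty M.D
  swap
  · have hz : ψ = 0 := funext fun d => absurd ⟨d⟩ hD
    rw [hz]; exact zero_mem _
  obtain ⟨b0⟩ := hD
  have hex : ∀ d, ∃ L, DPath M b0 d L := fun d => DPath.exists_dpath M b0 d
  set c : M.D → ℤ := fun d => (((hex d).choose).map ψ).sum with hc
  have hcd : ∀ d, DPath M b0 d (hex d).choose := fun d => (hex d).choose_spec
  have c_face : ∀ d d', M.SameFace d d' → c d = c d' := by
    intro d d' hdd
    exact gain_unique ψ hψ hT ((hcd d).congr_right hdd) (hcd d')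
  have c_alpha : ∀ d, c (M.α d) = c d + ψ d := by
    intro d
    have h1 := (hcd d).snoc (sameFace_refl d)
    have h2 := gain_unique ψ hψ hT (hcd (M.α d)) h1
    rw [List.map_append, List.sum_append] at h2
    simpa [hc] using h2
  letI S : Setoid M.D := permSetoid M.facePerm
  set r : M.D → M.D := fun d => (@Quotient.mk _ S d).out with hrdef
  have hr1 : ∀ d, M.SameFace (r d) d := by
    intro d
    exact Quotient.exact (Quotient.out_eq (@Quotient.mk _ S d))
  have hr2 : ∀ d d', M.SameFace d d' → r d = r d' := by
    intro d d' h
    simp only [hrdef]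
    congr 1
    exact Quotient.sound h
  have hrr : ∀ d, r (r d) = r d := fun d => hr2 _ _ (hr1 d)
  set s : Finset M.D := Finset.univ.image r with hs
  have hone : ∀ y : M.D,
      (∑ v ∈ s, (if M.facePerm.SameCycle v y then (-(c v)) else 0)) = -(c y) := by
    intro y
    rw [Finset.sum_eq_single_of_mem (r y)
      (Finset.mem_image_of_mem r (Finset.mem_univ y))]
    · rw [if_pos (hr1 y), c_face _ _ (hr1 y)]
    · intro v hv hne
      rw [if_neg]
      intro hcyc
      obtain ⟨u, _, rfl⟩ := Finset.mem_image.mp hv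
      apply hne
      rw [← hrr u]
      exact hr2 _ _ hcyc
  have hmain : ψ = ∑ v ∈ s, (-(c v)) • faceFlow M.σ M.α v := by
    funext x
    rw [Finset.sum_apply]
    have hterm : ∀ v ∈ s, ((-(c v)) • faceFlow M.σ M.α v) x
        = (if M.facePerm.SameCycle v x then (-(c v)) else 0)
          - (if M.facePerm.SameCycle v (M.α x) then (-(c v)) else 0) := by
      intro v _
      show (-(c v)) * faceFlow M.σ M.α v x = _
      unfold faceFlow
      rw [fperm_eq_facePerm]
      split_ifs <;> ring
    rw [Finset.sum_congr rfl hterm, Finset.sum_sub_distrib, hone x, hone (M.α x)]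
    have := c_alpha x
    linarith
  rw [hmain]
  refine AddSubgroup.sum_mem _ fun v _ => ?_
  exact AddSubgroup.zsmul_mem _ (AddSubgroup.subset_closure (Set.mem_range_self v)) _

end StatementTwoMain


/-- Let `G` be a map on an orientable surface of genus `g`
with a fixed reference orientation, let `F*` be the set of counterclockwise
facial walks of the dual map `G*`, and let `B*₁, …, B*₂g` be a set of cycles of
`G*` forming a homology-basis.  For two flows `φ, φ'` of `G`, the following are
equivalent: (1) `φ` and `φ'` are homologous; (2) `β(φ,W) = β(φ',W)` for every
closed walk `W` of `G*`; (3) `β(φ,F) = β(φ',F)` for every `F ∈ F*` and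
`β(φ,B*ᵢ) = β(φ',B*ᵢ)` for every `i`. -/
theorem homologous_flows_characterization
    (M : CombMap) (g : ℕ) (hgenus : M.eulerChar = 2 - 2 * (g : ℤ))
    (B : Fin (2 * g) → CWalk M.facePerm M.α) (hBc : ∀ i, (B i).IsCycle)
    (hB : IsHomologyBasis M.facePerm M.α B)
    (φ φ' : M.D → ℤ) (hφ : IsFlow M.α φ) (hφ' : IsFlow M.α φ') :
    (Homologous M.σ M.α φ φ' ↔
        ∀ W : CWalk M.facePerm M.α, M.beta φ W.flow = M.beta φ' W.flow) ∧
    (Homologous M.σ M.α φ φ' ↔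
        ((∀ d0 : M.D,
            M.beta φ (faceFlow M.facePerm M.α d0) = M.beta φ' (faceFlow M.facePerm M.α d0)) ∧
          ∀ i, M.beta φ (B i).flow = M.beta φ' (B i).flow)) := by
  have hψflow : IsFlow M.α (φ - φ') := by
    intro d
    simp only [Pi.sub_apply, hφ d, hφ' d]
    ring
  have h12 : Homologous M.σ M.α φ φ' →
      ∀ W : CWalk M.facePerm M.α, M.beta φ W.flow = M.beta φ' W.flow := by
    intro h W
    have h0 := beta_facial_walk _ h W
    rw [beta_sub_left] at h0
    linarith
  have h21 : (∀ W : CWalk M.facePerm M.α, M.beta φ W.flow = M.beta φ' W.flow) →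
      Homologous M.σ M.α φ φ' := by
    intro h
    refine mem_facial_of_tension _ hψflow ?_
    intro W
    have h0 : M.beta (φ - φ') W.flow = 0 := by
      rw [beta_sub_left, h W]; ring
    rw [beta_flow_eq _ hψflow W] at h0
    linarith
  refine ⟨⟨h12, h21⟩, ?_, ?_⟩
  · intro h
    refine ⟨?_, fun i => h12 h (B i)⟩
    intro d0
    have hgen : ∀ x ∈ facialSubgroup M.σ M.α,
        M.beta x (faceFlow M.facePerm M.α d0) = 0 := by
      intro x hx
      have hx' : x ∈ AddSubgroup.closure (Set.range (faceFlow M.σ M.α)) := hx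
      clear hx
      induction hx' using AddSubgroup.closure_induction with
      | mem y hy => obtain ⟨a, rfl⟩ := hy; exact beta_faceFlow_dualFaceFlow a d0
      | zero => exact beta_zero_left _
      | add a b _ _ ha hb => rw [beta_add_left, ha, hb]; ring
      | neg a _ ha => rw [beta_neg_left, ha]; ring
    have h0 := hgen _ h
    rw [beta_sub_left] at h0
    linarith
  · rintro ⟨h1, h2⟩
    apply h21
    intro W
    obtain ⟨μ, hμ⟩ := hB W
    have hψB : ∀ i, M.beta (φ - φ') (B i).flow = 0 := by
      intro i; rw [beta_sub_left, h2 i]; ring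
    have hψF : ∀ x ∈ facialSubgroup M.facePerm M.α, M.beta (φ - φ') x = 0 := by
      intro x hx
      have hx' : x ∈ AddSubgroup.closure (Set.range (faceFlow M.facePerm M.α)) := hx
      clear hx
      induction hx' using AddSubgroup.closure_induction with
      | mem y hy =>
        obtain ⟨a, rfl⟩ := hy
        rw [beta_sub_left, h1 a]; ring
      | zero => exact beta_zero_right _
      | add a b _ _ ha hb => rw [beta_add_right, ha, hb]; ring
      | neg a _ ha => rw [beta_neg_right, ha]; ring
    have hsplit : W.flow = (W.flow - ∑ i, μ i • (B i).flow) + ∑ i, μ i • (B i).flow := by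
      rw [sub_add_cancel]
    have h0 : M.beta (φ - φ') W.flow = 0 := by
      rw [hsplit, beta_add_right, hψF _ hμ, beta_sum_smul_right]
      rw [Finset.sum_congr rfl (fun i _ => by rw [hψB i, mul_zero])]
      simp
    rw [beta_sub_left] at h0
    linarith

end Schnyder
end
end

section
/- Let G be a map on an orientable surface of genus g and let {B_1,…,B_{2g}} be a set of cycles of G forming a homology-basis. An orientation of the primal-dual completion Ĝ is a Schnyder orientation if and only if it is a mod3-orientation such that γ(B_i) ≡ 0 (mod 3) for all 1 ≤ i ≤ 2g. -/
/-
Common combinatorial framework.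

Maps on compact orientable surfaces are formalized as rotation systems
(combinatorial maps): a finite set of darts together with a permutation `σ`
(counterclockwise successor around each vertex) and a fixed-point-free
involution `α` (reversal of darts).  Vertices are the orbits of `σ`, edges the
orbits of `α`, and the (counterclockwise) facial walks are the orbits of
`σ⁻¹ * α`.  The genus is recovered from the Euler characteristic.

Homology of the map is formalized by flows: integer-valued functions on darts;
the subgroup generated by the facial flows plays the role of the boundary
subgroup, two flows being homologous when their difference belongs to it.
Contractibility is formalized combinatorially: null-homotopy of closed walks is
generated by insertion/deletion of spurs and of facial boundaries (and rotation
of the base point).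

Schnyder woods are formalized by their angle labellings (corners ≃ darts, the
corner of dart `d` being the corner between `d` and `σ d` at the tail of `d`);
this follows the paper, where (generalized) Schnyder woods are exactly the
EDGE, ℕ*-VERTEX, ℕ*-FACE angle labellings, and where around an edge `{d, α d}`
the four corners in clockwise order are `d, σ⁻¹ (α d), α d, σ⁻¹ d`.
-/

noncomputable section
open scoped Classical

namespace Schnyder

/-! ### Auxiliary machinery for the proof -/

set_option linter.unusedSectionVars false
set_option maxHeartbeats 1000000

theorem Equiv.Perm.apply_inv_self {α : Type*} (f : Equiv.Perm α) (x : α) : f (f⁻¹ x) = x :=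
  f.apply_symm_apply x

theorem Equiv.Perm.inv_apply_self {α : Type*} (f : Equiv.Perm α) (x : α) : f⁻¹ (f x) = x :=
  f.symm_apply_apply x

namespace SAux
open Finset

variable {X : Type} [Fintype X]

lemma per_pos (f : Equiv.Perm X) (x : X) : 0 < Function.minimalPeriod f x := by
  apply Function.IsPeriodicPt.minimalPeriod_pos (orderOf_pos f)
  show (f ^ orderOf f) x = x
  rw [pow_orderOf_eq_one]; rfl

lemma pow_per (f : Equiv.Perm X) (x : X) : (f ^ Function.minimalPeriod f x) x = x :=
  Function.iterate_minimalPeriod (f := f) (x := x)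

lemma pow_inj_on (f : Equiv.Perm X) (x : X) {a b : ℕ}
    (ha : a < Function.minimalPeriod f x) (hb : b < Function.minimalPeriod f x)
    (h : (f ^ a) x = (f ^ b) x) : a = b :=
  Function.iterate_injOn_Iio_minimalPeriod ha hb h

lemma sameCycle_pow (f : Equiv.Perm X) (x : X) (l : ℕ) : f.SameCycle x ((f ^ l) x) :=
  ⟨l, by rw [zpow_natCast]⟩

lemma per_le {f : Equiv.Perm X} {x : X} {k : ℕ} (hk : 0 < k) (h : (f ^ k) x = x) :
    Function.minimalPeriod f x ≤ k :=
  Function.IsPeriodicPt.minimalPeriod_le hk h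

/-- sum over an orbit as sum over iterates -/
lemma orbit_sum0 (f : Equiv.Perm X) (x : X) (u : X → ZMod 3) :
    ∑ d ∈ univ.filter (f.SameCycle x ·), u d
      = ∑ l ∈ range (Function.minimalPeriod f x), u ((f ^ l) x) := by
  set n := Function.minimalPeriod f x with hn
  refine (Finset.sum_bij (fun l _ => (f ^ l) x) ?_ ?_ ?_ ?_).symm
  · intro l hl; simp only [mem_filter, mem_univ, true_and]; exact sameCycle_pow f x l
  · intro a ha b hb h
    exact pow_inj_on f x (mem_range.mp ha) (mem_range.mp hb) h
  · intro d hd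
    simp only [mem_filter, mem_univ, true_and] at hd
    obtain ⟨k, _, hk⟩ := hd.exists_pow_eq'
    refine ⟨k % n, mem_range.mpr (Nat.mod_lt _ (per_pos f x)), ?_⟩
    show (f ^ (k % n)) x = d
    rw [← hk]
    show f^[k % n] x = f^[k] x
    exact Function.iterate_mod_minimalPeriod_eq
  · intro l _; rfl

/-- shifted version -/
lemma orbit_sum1 (f : Equiv.Perm X) (x : X) (u : X → ZMod 3) :
    ∑ d ∈ univ.filter (f.SameCycle x ·), u d
      = ∑ l ∈ range (Function.minimalPeriod f x), u ((f ^ (l+1)) x) := by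
  rw [orbit_sum0]
  set n := Function.minimalPeriod f x with hn
  have hpos : 0 < n := per_pos f x
  have h1 : ∑ l ∈ range n, u ((f ^ (l+1)) x) = ∑ l ∈ Ico 1 (n+1), u ((f ^ l) x) := by
    rw [Finset.sum_Ico_eq_sum_range]
    simp only [Nat.add_sub_cancel]
    refine Finset.sum_congr rfl fun l _ => by rw [add_comm]
  have h2 : ∑ l ∈ Ico 1 (n+1), u ((f ^ l) x)
      = (∑ l ∈ Ico 1 n, u ((f ^ l) x)) + u ((f ^ n) x) :=
    Finset.sum_Ico_succ_top hpos _
  have h3 : ∑ l ∈ range n, u ((f ^ l) x)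
      = u ((f ^ 0) x) + ∑ l ∈ Ico 1 n, u ((f ^ l) x) := by
    rw [Finset.range_eq_Ico]
    exact Finset.sum_eq_sum_Ico_succ_bot hpos _
  rw [h1, h2, h3, pow_per, pow_zero]
  simp [add_comm]


lemma nat_np {n k : ℕ} (h0 : 0 < n) (hk : k < n) : ((k + (n-1)) % n + 1) % n = k := by
  rcases Nat.eq_zero_or_pos k with hk0 | hk1
  · subst hk0
    have e1 : (0 + (n-1)) % n = n - 1 := by
      rw [Nat.zero_add]; exact Nat.mod_eq_of_lt (by omega)
    rw [e1, show n - 1 + 1 = n by omega, Nat.mod_self]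
  · have e1 : (k + (n-1)) % n = k - 1 := by
      rw [show k + (n-1) = (k-1) + n by omega, Nat.add_mod_right]
      exact Nat.mod_eq_of_lt (by omega)
    rw [e1, show k - 1 + 1 = k by omega]
    exact Nat.mod_eq_of_lt hk

lemma nat_pn {n k : ℕ} (h0 : 0 < n) (hk : k < n) : ((k + 1) % n + (n-1)) % n = k := by
  rcases Nat.lt_or_ge (k+1) n with h1 | h1
  · rw [Nat.mod_eq_of_lt h1, show k + 1 + (n-1) = k + n by omega, Nat.add_mod_right]
    exact Nat.mod_eq_of_lt hk
  · have h2 : k + 1 = n := by omega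
    rw [h2, Nat.mod_self, Nat.zero_add, Nat.mod_eq_of_lt (by omega)]
    omega

lemma cyc_next_prev {n : ℕ} (h : 0 < n) (k : Fin n) :
    cyclicNext h (cyclicPrev h k) = k := by
  unfold cyclicNext cyclicPrev
  exact Fin.ext (nat_np h k.isLt)

lemma cyc_prev_next {n : ℕ} (h : 0 < n) (k : Fin n) :
    cyclicPrev h (cyclicNext h k) = k := by
  unfold cyclicNext cyclicPrev
  exact Fin.ext (nat_pn h k.isLt)

def cycEquiv {n : ℕ} (h : 0 < n) : Fin n ≃ Fin n where
  toFun := cyclicPrev h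
  invFun := cyclicNext h
  left_inv := cyc_next_prev h
  right_inv := cyc_prev_next h

lemma sum_prev {n : ℕ} (h : 0 < n) (F : Fin n → ZMod 3) :
    ∑ k, F (cyclicPrev h k) = ∑ k, F k :=
  Equiv.sum_comp (cycEquiv h) F

lemma sum_next {n : ℕ} (h : 0 < n) (F : Fin n → ZMod 3) :
    ∑ k, F (cyclicNext h k) = ∑ k, F k :=
  Equiv.sum_comp (cycEquiv h).symm F

lemma chain_prev {σ α : Equiv.Perm X} (C : CWalk σ α) (k : Fin C.n) :
    σ.SameCycle (α (C.darts (cyclicPrev C.pos k))) (C.darts k) := by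
  have := C.chain (cyclicPrev C.pos k)
  rwa [cyc_next_prev C.pos k] at this

lemma orbit_reindex (f : Equiv.Perm X) (x : X) (u : X → ZMod 3) :
    ∑ d ∈ univ.filter (f.SameCycle x ·), u (f d)
      = ∑ d ∈ univ.filter (f.SameCycle x ·), u d := by
  rw [Finset.sum_filter, Finset.sum_filter,
    ← Equiv.sum_comp f (fun d => if f.SameCycle x d then u d else 0)]
  refine Finset.sum_congr rfl fun d _ => ?_
  by_cases h : f.SameCycle x d <;>
    simp [h, Equiv.Perm.sameCycle_apply_right]

end SAux

end Schnyder

namespace Schnyder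
namespace SP
open Finset SAux

variable (M : CombMap) (o : M.D × Bool → Bool)

def eps : M.D → ZMod 3 := fun d => if o (d, false) = true then 1 else 0

def eta : M.D → ZMod 3 := fun d => if o (d, true) = true then 1 else 0

/-- canonical representative of the σ-orbit -/
def vrep (d : M.D) : M.D := (@Quotient.mk _ (permSetoid M.σ) d).out

lemma vrep_same (d : M.D) : M.σ.SameCycle (vrep M d) d :=
  @Quotient.mk_out _ (permSetoid M.σ) d

lemma vrep_congr {d d' : M.D} (h : M.σ.SameCycle d d') : vrep M d = vrep M d' := by
  unfold vrep
  rw [Quotient.sound h]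

lemma exists_pow_vrep (d : M.D) : ∃ k, (M.σ ^ k) (vrep M d) = d := by
  obtain ⟨k, _, hk⟩ := (vrep_same M d).exists_pow_eq'
  exact ⟨k, hk⟩

def sIdx (d : M.D) : ℕ := Nat.find (exists_pow_vrep M d)

def S : M.D → ZMod 3 := fun d =>
  ∑ l ∈ range (sIdx M d), eps M o ((M.σ ^ (l+1)) (vrep M d))

def hfn : M.D → ZMod 3 := fun d =>
  eta M o d + eps M o (M.α d) + S M o d - S M o (M.α d)

section hyps

variable (Hv : ∀ d0, ∑ d ∈ univ.filter (M.σ.SameCycle d0 ·), eps M o d = 0)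
variable (Hf : ∀ d0, ∑ d ∈ univ.filter (M.facePerm.SameCycle d0 ·), eta M o d = 0)
variable (He : ∀ d, eps M o d + eps M o (M.α d) + eta M o d + eta M o (M.α d) = 0)

include Hv

lemma S_step (d : M.D) : S M o (M.σ d) = S M o d + eps M o (M.σ d) := by
  have hb : vrep M (M.σ d) = vrep M d := (vrep_congr M ⟨1, by simp⟩).symm
  set b := vrep M d with hbdef
  set k := sIdx M d with hkdef
  have hk : (M.σ ^ k) b = d := Nat.find_spec (exists_pow_vrep M d)
  have hkmin : ∀ j, j < k → (M.σ ^ j) b ≠ d := fun j hj => Nat.find_min _ hj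
  have hsucc : (M.σ ^ (k+1)) b = M.σ d := by
    rw [pow_succ']
    show M.σ ((M.σ ^ k) b) = M.σ d
    rw [hk]
  by_cases hcase : M.σ d = b
  · -- wrap around: the new index is 0
    have h0 : sIdx M (M.σ d) = 0 := by
      have h0' : sIdx M (M.σ d) = Nat.find (exists_pow_vrep M (M.σ d)) := rfl
      rw [h0', Nat.find_eq_zero, hb, pow_zero]
      exact hcase.symm
    have hS0 : S M o (M.σ d) = 0 := by
      unfold S
      rw [h0]
      simp
    have hper : Function.minimalPeriod M.σ b = k + 1 := by
      have h1 : (M.σ ^ (k+1)) b = b := by rw [hsucc, hcase]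
      refine le_antisymm (per_le (Nat.succ_pos _) h1) ?_
      by_contra hlt
      push_neg at hlt
      set p := Function.minimalPeriod M.σ b with hp
      have hppos : 0 < p := per_pos M.σ b
      have hple : p ≤ k := by omega
      have h2 : (M.σ ^ (k - p)) ((M.σ ^ p) b) = d := by
        rw [← Equiv.Perm.mul_apply, ← pow_add, show k - p + p = k by omega, hk]
      rw [pow_per] at h2
      exact hkmin (k - p) (by omega) h2
    have hsum : ∑ l ∈ range (k+1), eps M o ((M.σ ^ (l+1)) b) = 0 := by
      rw [← hper, ← orbit_sum1]
      exact Hv b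
    rw [hS0]
    rw [Finset.sum_range_succ, hsucc] at hsum
    unfold S
    linear_combination - hsum
  · have h1 : sIdx M (M.σ d) = k + 1 := by
      have : sIdx M (M.σ d) = Nat.find (exists_pow_vrep M (M.σ d)) := rfl
      rw [this, Nat.find_eq_iff]
      constructor
      · rw [hb]; exact hsucc
      · intro j hj
        rw [hb]
        match j with
        | 0 =>
            intro hh
            simp only [pow_zero, Equiv.Perm.coe_one, id_eq] at hh
            exact hcase hh.symm
        | (j'+1) =>
            intro hh
            rw [pow_succ'] at hh
            have : (M.σ ^ j') b = d := M.σ.injective hh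
            exact hkmin j' (by omega) this
    unfold S
    rw [h1, hb, ← hbdef, ← hkdef, Finset.sum_range_succ, hsucc]

lemma S_step' (d : M.D) : S M o d = S M o (M.σ⁻¹ d) + eps M o d := by
  have := S_step M o Hv (M.σ⁻¹ d)
  rwa [Equiv.Perm.apply_inv_self] at this

lemma S_tel (m : ℕ) (x : M.D) :
    S M o ((M.σ ^ m) x) = S M o x + ∑ l ∈ range m, eps M o ((M.σ ^ (l+1)) x) := by
  induction m with
  | zero => simp
  | succ m ih =>
      have h1 : (M.σ ^ (m+1)) x = M.σ ((M.σ ^ m) x) := by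
        rw [pow_succ']; rfl
      rw [h1, S_step M o Hv, ih, sum_range_succ, ← h1]
      ring

lemma sector_sum {x y : M.D} (hxy : M.σ.SameCycle x y) :
    ((∑ d, if ccwSector M.σ x y d ∧ o (d, false) = true then (1:ℤ) else 0 : ℤ) : ZMod 3)
      = S M o y - eps M o y - S M o x := by
  have hEx : ∃ k, 0 < k ∧ (M.σ ^ k) x = y := by
    obtain ⟨i, h1, _, h2⟩ := hxy.exists_pow_eq''
    exact ⟨i, h1, h2⟩
  set K := Nat.find hEx with hKdef
  obtain ⟨hKpos, hKy⟩ := Nat.find_spec hEx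
  rw [← hKdef] at hKpos hKy
  have hKmin : ∀ j, 0 < j → j < K → (M.σ ^ j) x ≠ y := fun j h1 h2 hj =>
    Nat.find_min hEx h2 ⟨h1, hj⟩
  have hKle : K ≤ Function.minimalPeriod M.σ x := by
    by_contra hcon
    push_neg at hcon
    set p := Function.minimalPeriod M.σ x with hp
    have hppos : 0 < p := per_pos M.σ x
    have h1 : (M.σ ^ (K - p)) ((M.σ ^ p) x) = y := by
      rw [← Equiv.Perm.mul_apply, ← pow_add, show K - p + p = K by omega, hKy]
    rw [pow_per] at h1
    exact hKmin (K - p) (by omega) (by omega) h1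
  -- rewrite the sum
  have hsplit : ∀ d : M.D, (if ccwSector M.σ x y d ∧ o (d, false) = true then (1:ℤ) else 0)
      = if ccwSector M.σ x y d then (if o (d, false) = true then (1:ℤ) else 0) else 0 := by
    intro d
    by_cases h1 : ccwSector M.σ x y d <;> by_cases h2 : o (d, false) = true <;> simp [h1, h2]
  have hfilter : univ.filter (fun d => ccwSector M.σ x y d)
      = (Ico 1 K).image (fun l => (M.σ ^ l) x) := by
    ext d
    simp only [mem_filter, mem_univ, true_and, mem_image, mem_Ico]
    constructor
    · rintro ⟨k, hk0, hkd, hno⟩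
      by_cases hkK : k < K
      · exact ⟨k, ⟨hk0, hkK⟩, hkd⟩
      · exact absurd hKy (hno K hKpos (by omega))
    · rintro ⟨l, ⟨hl1, hlK⟩, rfl⟩
      exact ⟨l, by omega, rfl, fun l' hl'0 hl'le =>
        hKmin l' hl'0 (lt_of_le_of_lt hl'le hlK)⟩
  have hinj : Set.InjOn (fun l => (M.σ ^ l) x) (Ico 1 K : Finset ℕ) := by
    intro a ha b hb hab
    simp only [coe_Ico, Set.mem_Ico] at ha hb
    exact pow_inj_on M.σ x (by omega) (by omega) hab
  push_cast
  calc (∑ d, if ccwSector M.σ x y d ∧ o (d, false) = true then (1:ZMod 3) else 0)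
      = ∑ d, (if ccwSector M.σ x y d then eps M o d else 0) := by
        refine Finset.sum_congr rfl fun d _ => ?_
        by_cases h1 : ccwSector M.σ x y d <;> by_cases h2 : o (d, false) = true <;>
          simp [h1, h2, eps]
    _ = ∑ d ∈ univ.filter (fun d => ccwSector M.σ x y d), eps M o d := by
        rw [Finset.sum_filter]
    _ = ∑ l ∈ Ico 1 K, eps M o ((M.σ ^ l) x) := by
        rw [hfilter, Finset.sum_image (fun a ha b hb h => hinj ha hb h)]
    _ = ∑ j ∈ range (K - 1), eps M o ((M.σ ^ (j+1)) x) := by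
        rw [Finset.sum_Ico_eq_sum_range]
        refine Finset.sum_congr rfl fun j _ => by rw [add_comm]
    _ = S M o ((M.σ ^ (K-1)) x) - S M o x := by
        rw [S_tel M o Hv]
        ring
    _ = S M o y - eps M o y - S M o x := by
        have h1 : (M.σ ^ (K-1)) x = M.σ⁻¹ y := by
          have h2 : M.σ ((M.σ ^ (K-1)) x) = y := by
            rw [← hKy]
            conv_rhs => rw [show K = (K-1) + 1 by omega]
            rw [pow_succ']
            rfl
          rw [← h2, Equiv.Perm.inv_apply_self]
        rw [h1]
        have h3 := S_step' M o Hv y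
        linear_combination -h3

omit Hv in
include He in
lemma h_alpha (d : M.D) : hfn M o (M.α d) = - hfn M o d := by
  have h2 : M.α (M.α d) = d := M.α_invol d
  have := He d
  unfold hfn
  rw [h2]
  linear_combination this


omit Hv in
include He in
lemma eta_false (d : M.D) :
    ((if o (d, true) = false then (1:ℤ) else 0 : ℤ) : ZMod 3) = 1 - eta M o d := by
  unfold eta
  by_cases h : o (d, true) = true
  · simp [h]
  · simp at h
    simp [h]

omit Hv in
include He in
lemma hfn_alpha (d : M.D) : hfn M o (M.α d) = - hfn M o d := h_alpha M o He d

include He in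
lemma gamma_cast (C : M.ClosedWalk) :
    ((M.gammaPDC o C : ℤ) : ZMod 3) = 2 * ∑ k, hfn M o (C.darts k) := by
  unfold CombMap.gammaPDC
  rw [Int.cast_add, Int.cast_sum, Int.cast_sum]
  have h1 : ∀ k : Fin C.n,
      ((∑ d : M.D,
        ((if ccwSector M.σ (M.α (C.darts (cyclicPrev C.pos k))) (C.darts k) d ∧
              o (d, false) = true then (1 : ℤ) else 0) -
          (if ccwSector M.σ (C.darts k) (M.α (C.darts (cyclicPrev C.pos k))) d ∧
              o (d, false) = true then (1:ℤ) else 0)) : ℤ) : ZMod 3)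
      = (2 * S M o (C.darts k) - eps M o (C.darts k))
        + (-2 * S M o (M.α (C.darts (cyclicPrev C.pos k)))
            + eps M o (M.α (C.darts (cyclicPrev C.pos k)))) := by
    intro k
    have hsc := SAux.chain_prev C k
    rw [Finset.sum_sub_distrib, Int.cast_sub, sector_sum M o Hv hsc,
      sector_sum M o Hv hsc.symm]
    ring
  have h2 : ∀ k : Fin C.n,
      ((((if o (M.α (C.darts k), true) = false then (1:ℤ) else 0) -
          (if o (C.darts k, true) = false then (1:ℤ) else 0)) : ℤ) : ZMod 3)
      = eta M o (C.darts k) - eta M o (M.α (C.darts k)) := by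
    intro k
    rw [Int.cast_sub, eta_false M o He, eta_false M o He]
    ring
  rw [Finset.sum_congr rfl (fun k _ => h1 k), Finset.sum_congr rfl (fun k _ => h2 k)]
  rw [Finset.sum_add_distrib]
  rw [SAux.sum_prev C.pos (fun k => -2 * S M o (M.α (C.darts k)) + eps M o (M.α (C.darts k)))]
  rw [← Finset.sum_add_distrib, ← Finset.sum_add_distrib, Finset.mul_sum]
  refine Finset.sum_congr rfl fun k _ => ?_
  have hHe := He (C.darts k)
  unfold hfn
  linear_combination - hHe

include He in
lemma flow_pair (W : M.ClosedWalk) :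
    ∑ d, ((W.flow d : ℤ) : ZMod 3) * hfn M o d = 2 * ∑ k, hfn M o (W.darts k) := by
  unfold CWalk.flow
  have step1 : ∀ d : M.D, ((∑ k : Fin W.n,
      ((if W.darts k = d then (1:ℤ) else 0) - (if W.darts k = M.α d then 1 else 0)) : ℤ) : ZMod 3)
        * hfn M o d
      = ∑ k : Fin W.n, (((if W.darts k = d then (1:ZMod 3) else 0)
          - (if W.darts k = M.α d then 1 else 0)) * hfn M o d) := by
    intro d
    rw [Int.cast_sum, Finset.sum_mul]
    push_cast
    rfl
  rw [Finset.sum_congr rfl (fun d _ => step1 d), Finset.sum_comm]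
  have step2 : ∀ k : Fin W.n, (∑ d : M.D, (((if W.darts k = d then (1:ZMod 3) else 0)
          - (if W.darts k = M.α d then 1 else 0)) * hfn M o d))
      = 2 * hfn M o (W.darts k) := by
    intro k
    have hsplit2 : ∀ d : M.D, (((if W.darts k = d then (1:ZMod 3) else 0)
          - (if W.darts k = M.α d then 1 else 0)) * hfn M o d)
        = (if W.darts k = d then hfn M o d else 0)
          - (if W.darts k = M.α d then hfn M o d else 0) := by
      intro d
      have hne : ¬ (d = M.α d) := fun h => M.α_fixfree d h.symm
      by_cases hA : W.darts k = d
      · by_cases hB : W.darts k = M.α d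
        · exact absurd (hA.symm.trans hB) hne
        · rw [if_pos hA, if_neg hB, if_pos hA, if_neg hB]; ring
      · by_cases hB : W.darts k = M.α d
        · rw [if_neg hA, if_pos hB, if_neg hA, if_pos hB]; ring
        · rw [if_neg hA, if_neg hB, if_neg hA, if_neg hB]; ring
    rw [Finset.sum_congr rfl (fun d _ => hsplit2 d), Finset.sum_sub_distrib,
      Finset.sum_ite_eq]
    have e3 : (∑ d : M.D, if W.darts k = M.α d then hfn M o d else 0)
        = ∑ d : M.D, if W.darts k = d then hfn M o (M.α d) else 0 := by
      rw [← Equiv.sum_comp M.α (fun d => if W.darts k = M.α d then hfn M o d else 0)]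
      refine Finset.sum_congr rfl fun d _ => ?_
      show (if W.darts k = M.α (M.α d) then hfn M o (M.α d) else 0) = _
      rw [M.α_invol]
    rw [e3, Finset.sum_ite_eq]
    simp only [Finset.mem_univ, if_true]
    rw [h_alpha M o He]
    ring
  rw [Finset.sum_congr rfl (fun k _ => step2 k), ← Finset.mul_sum]

include Hf in
lemma face_h (d0 : M.D) :
    ∑ d ∈ univ.filter (M.facePerm.SameCycle d0 ·), hfn M o d = 0 := by
  have hform : ∀ d, hfn M o d = eta M o d + (S M o d - S M o (M.facePerm d)) := by
    intro d
    have h1 : M.σ (M.facePerm d) = M.α d := by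
      show M.σ ((fperm M.σ M.α) d) = M.α d
      unfold fperm
      rw [Equiv.Perm.mul_apply, Equiv.Perm.apply_inv_self]
    have h2 := S_step M o Hv (M.facePerm d)
    rw [h1] at h2
    unfold hfn
    linear_combination -h2
  rw [Finset.sum_congr rfl (fun d _ => hform d), Finset.sum_add_distrib, Hf d0,
    Finset.sum_sub_distrib]
  rw [show (∑ d ∈ univ.filter (M.facePerm.SameCycle d0 ·), S M o (M.facePerm d))
      = ∑ d ∈ univ.filter (M.facePerm.SameCycle d0 ·), S M o d from
    SAux.orbit_reindex M.facePerm d0 (S M o)]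
  ring

/-- the linear functional pairing a flow with `hfn` -/
def Lam : (M.D → ℤ) →+ ZMod 3 where
  toFun f := ∑ d, ((f d : ℤ) : ZMod 3) * hfn M o d
  map_zero' := by simp
  map_add' f g := by
    rw [← Finset.sum_add_distrib]
    refine Finset.sum_congr rfl fun d _ => ?_
    have e : (f + g) d = f d + g d := rfl
    rw [e]
    push_cast
    ring

include Hf He in
lemma lam_facial {f : M.D → ℤ} (hmem : f ∈ facialSubgroup M.σ M.α) : Lam M o f = 0 := by
  refine AddSubgroup.closure_induction ?_ ?_ ?_ ?_ hmem
  · rintro _ ⟨d0, rfl⟩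
    show ∑ d, ((faceFlow M.σ M.α d0 d : ℤ) : ZMod 3) * hfn M o d = 0
    have e1 : ∀ d : M.D, ((faceFlow M.σ M.α d0 d : ℤ) : ZMod 3) * hfn M o d
        = (if M.facePerm.SameCycle d0 d then hfn M o d else 0)
          + (if M.facePerm.SameCycle d0 (M.α d) then hfn M o (M.α d) else 0) := by
      intro d
      unfold faceFlow
      have hfp : (fperm M.σ M.α) = M.facePerm := rfl
      have hh := h_alpha M o He d
      rw [hfp]
      by_cases hA : M.facePerm.SameCycle d0 d <;>
        by_cases hB : M.facePerm.SameCycle d0 (M.α d) <;>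
          simp [hA, hB] <;>
            first
              | ring1
              | linear_combination hh
              | linear_combination -hh
    rw [Finset.sum_congr rfl (fun d _ => e1 d), Finset.sum_add_distrib]
    have e2 : (∑ d : M.D, if M.facePerm.SameCycle d0 (M.α d) then hfn M o (M.α d) else 0)
        = ∑ d : M.D, if M.facePerm.SameCycle d0 d then hfn M o d else 0 := by
      exact Equiv.sum_comp M.α (fun z => if M.facePerm.SameCycle d0 z then hfn M o z else 0)
    rw [e2, ← Finset.sum_filter, face_h M o Hv Hf d0, add_zero]
  · exact (Lam M o).map_zero
  · intro a b _ _ ha hb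
    rw [(Lam M o).map_add, ha, hb, add_zero]
  · intro a _ ha
    rw [(Lam M o).map_neg, ha, neg_zero]

end hyps

lemma outdegP_cast (d0 : M.D) :
    ((M.outdegPrimal o d0 : ℕ) : ZMod 3)
      = ∑ d ∈ univ.filter (M.σ.SameCycle d0 ·), eps M o d := by
  unfold CombMap.outdegPrimal
  rw [Nat.card_eq_fintype_card, Fintype.card_subtype, Finset.card_filter]
  push_cast
  rw [Finset.sum_filter]
  refine Finset.sum_congr rfl fun d _ => ?_
  by_cases h1 : M.σ.SameCycle d0 d <;> by_cases h2 : o (d, false) = true <;>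
    simp [h1, h2, eps, CombMap.SameVertex]

lemma outdegD_cast (d0 : M.D) :
    ((M.outdegDual o d0 : ℕ) : ZMod 3)
      = ∑ d ∈ univ.filter (M.facePerm.SameCycle d0 ·), eta M o d := by
  unfold CombMap.outdegDual
  rw [Nat.card_eq_fintype_card, Fintype.card_subtype, Finset.card_filter]
  push_cast
  rw [Finset.sum_filter]
  refine Finset.sum_congr rfl fun d _ => ?_
  by_cases h1 : M.facePerm.SameCycle d0 d <;> by_cases h2 : o (d, true) = true <;>
    simp [h1, h2, eta, CombMap.SameFace]

/-! ### Chains in the corner graph -/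

inductive Chain (M : CombMap) (o : M.D × Bool → Bool) : M.D → M.D → ZMod 3 → List M.D → Prop
  | nil (a : M.D) : Chain M o a a 0 []
  | stepS {a b : M.D} {w : ZMod 3} {L : List M.D} :
      Chain M o a b w L → Chain M o a (M.σ b) (w + eps M o (M.σ b)) L
  | stepSinv {a b : M.D} {w : ZMod 3} {L : List M.D} :
      Chain M o a b w L → Chain M o a (M.σ⁻¹ b) (w - eps M o b) L
  | stepA {a b : M.D} {w : ZMod 3} {L : List M.D} :
      Chain M o a b w L →
      Chain M o a (M.α b) (w + eta M o b + eps M o (M.α b)) (L ++ [b])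

lemma chain_trans {a b c : M.D} {w w' : ZMod 3} {L L' : List M.D}
    (h1 : Chain M o a b w L) (h2 : Chain M o b c w' L') :
    Chain M o a c (w + w') (L ++ L') := by
  induction h2 with
  | nil => simpa using h1
  | stepS h ih =>
      rw [← add_assoc]
      exact ih.stepS
  | @stepSinv c w'' L'' h ih =>
      have h3 := ih.stepSinv
      rwa [add_sub_assoc] at h3
  | @stepA c w'' L'' h ih =>
      have h3 := ih.stepA
      rwa [show w + w'' + eta M o c + eps M o (M.α c)
          = w + (w'' + eta M o c + eps M o (M.α c)) by ring,
        List.append_assoc] at h3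

lemma chain_symm (He : ∀ d, eps M o d + eps M o (M.α d) + eta M o d + eta M o (M.α d) = 0)
    {a b : M.D} {w : ZMod 3} {L : List M.D} (h : Chain M o a b w L) :
    ∃ L', Chain M o b a (-w) L' := by
  induction h with
  | nil => exact ⟨[], by simpa using Chain.nil (M := M) (o := o) a⟩
  | @stepS b w L h ih =>
      obtain ⟨L', hL'⟩ := ih
      have h1 : Chain M o (M.σ b) b (0 - eps M o (M.σ b)) [] := by
        have := Chain.nil (M := M) (o := o) (M.σ b) |>.stepSinv
        rwa [Equiv.Perm.inv_apply_self] at this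
      have h2 := chain_trans M o h1 hL'
      refine ⟨[] ++ L', ?_⟩
      have hw : (0 - eps M o (M.σ b)) + -w = -(w + eps M o (M.σ b)) := by ring
      rwa [hw] at h2
  | @stepSinv b w L h ih =>
      obtain ⟨L', hL'⟩ := ih
      have h1 := Chain.nil (M := M) (o := o) (M.σ⁻¹ b) |>.stepS
      rw [Equiv.Perm.apply_inv_self] at h1
      have h2 := chain_trans M o h1 hL'
      refine ⟨[] ++ L', ?_⟩
      have hw : (0 + eps M o b) + -w = -(w - eps M o b) := by ring
      rwa [hw] at h2
  | @stepA b w L h ih =>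
      obtain ⟨L', hL'⟩ := ih
      have h1 := Chain.nil (M := M) (o := o) (M.α b) |>.stepA
      rw [M.α_invol] at h1
      have h2 := chain_trans M o h1 hL'
      refine ⟨[M.α b] ++ L', ?_⟩
      have hw : (0 + eta M o (M.α b) + eps M o b) + -w
          = -(w + eta M o b + eps M o (M.α b)) := by
        linear_combination He b
      rwa [hw] at h2

lemma chain_total (He : ∀ d, eps M o d + eps M o (M.α d) + eta M o d + eta M o (M.α d) = 0)
    (a b : M.D) : ∃ w L, Chain M o a b w L := by
  have h := M.connected a b
  induction h with
  | rel x y hxy =>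
      rcases hxy with h | h
      · subst h; exact ⟨_, _, Chain.nil (M := M) (o := o) x |>.stepS⟩
      · subst h; exact ⟨_, _, Chain.nil (M := M) (o := o) x |>.stepA⟩
  | refl x => exact ⟨_, _, Chain.nil (M := M) (o := o) x⟩
  | symm x y _ ih =>
      obtain ⟨w, L, hL⟩ := ih
      obtain ⟨L', hL'⟩ := chain_symm M o He hL
      exact ⟨_, _, hL'⟩
  | trans x y z _ _ ih1 ih2 =>
      obtain ⟨w1, L1, h1⟩ := ih1
      obtain ⟨w2, L2, h2⟩ := ih2
      exact ⟨_, _, chain_trans M o h1 h2⟩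

lemma chain_weight (Hv : ∀ d0, ∑ d ∈ univ.filter (M.σ.SameCycle d0 ·), eps M o d = 0)
    {a b : M.D} {w : ZMod 3} {L : List M.D} (h : Chain M o a b w L) :
    w = S M o b - S M o a + (L.map (hfn M o)).sum := by
  induction h with
  | nil => simp
  | @stepS b w L h ih =>
      rw [S_step M o Hv]
      linear_combination ih
  | @stepSinv b w L h ih =>
      have hs := S_step' M o Hv b
      linear_combination ih + hs
  | @stepA b w L h ih =>
      rw [List.map_append, List.sum_append]
      simp only [List.map_cons, List.map_nil, List.sum_cons, List.sum_nil]
      have hb : hfn M o b = eta M o b + eps M o (M.α b) + S M o b - S M o (M.α b) := rfl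
      linear_combination ih - hb

/-! ### From closed chains to closed walks -/

def Linked (M : CombMap) (a b : M.D) (L : List M.D) : Prop :=
  (L = [] → M.σ.SameCycle a b) ∧
  (∀ h : 0 < L.length, M.σ.SameCycle a (L[0]'h)) ∧
  (∀ h : 0 < L.length, M.σ.SameCycle (M.α (L[L.length - 1]'(by omega))) b) ∧
  (∀ i, ∀ h : i + 1 < L.length, M.σ.SameCycle (M.α (L[i]'(by omega))) (L[i+1]'h))

lemma chain_linked {a b : M.D} {w : ZMod 3} {L : List M.D}
    (h : Chain M o a b w L) : Linked M a b L := by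
  induction h with
  | nil =>
      refine ⟨fun _ => Equiv.Perm.SameCycle.refl _ _, ?_, ?_, ?_⟩
      · intro h; simp at h
      · intro h; simp at h
      · intro i hi; simp at hi
  | @stepS b w L h ih =>
      obtain ⟨e0, e1, e2, e3⟩ := ih
      exact ⟨fun hL => (e0 hL).trans ⟨1, by simp⟩, e1,
        fun h => (e2 h).trans ⟨1, by simp⟩, e3⟩
  | @stepSinv b w L h ih =>
      obtain ⟨e0, e1, e2, e3⟩ := ih
      exact ⟨fun hL => (e0 hL).trans ⟨-1, by simp⟩, e1,
        fun h => (e2 h).trans ⟨-1, by simp⟩, e3⟩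
  | @stepA b w L h ih =>
      obtain ⟨e0, e1, e2, e3⟩ := ih
      refine ⟨by simp, ?_, ?_, ?_⟩
      · intro h
        rcases Nat.eq_zero_or_pos L.length with h0 | h0
        · have hLnil : L = [] := List.length_eq_zero_iff.mp h0
          subst hLnil
          simpa using e0 rfl
        · have hidx : (L ++ [b])[0]'h = L[0]'h0 := List.getElem_append_left h0
          rw [hidx]
          exact e1 h0
      · intro h
        have hlen : (L ++ [b]).length - 1 = L.length := by simp
        have hidx : (L ++ [b])[(L ++ [b]).length - 1]'(by omega) = b := by
          simp [hlen]
        rw [hidx]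
      · intro i hi
        simp only [List.length_append, List.length_singleton] at hi
        rcases Nat.lt_or_ge (i+1) L.length with h1 | h1
        · have hidx1 : (L ++ [b])[i]'(by simp; omega) = L[i]'(by omega) :=
            List.getElem_append_left (by omega)
          have hidx2 : (L ++ [b])[i+1]'(by simp; omega) = L[i+1]'h1 :=
            List.getElem_append_left h1
          rw [hidx1, hidx2]
          exact e3 i h1
        · have hieq : i + 1 = L.length := by omega
          have hpos : 0 < L.length := by omega
          have hidx1 : (L ++ [b])[i]'(by simp; omega) = L[i]'(by omega) :=
            List.getElem_append_left (by omega)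
          have hidx2 : (L ++ [b])[i+1]'(by simp; omega) = b := by
            have : i + 1 = L.length := hieq
            simp [this]
          rw [hidx1, hidx2]
          have : L[i]'(by omega) = L[L.length - 1]'(by omega) := by
            congr 1
            omega
          rw [this]
          exact e2 hpos

lemma exists_walk {a : M.D} {L : List M.D} (hlink : Linked M a a L)
    (hL : 0 < L.length) :
    ∃ W : M.ClosedWalk, ∀ u : M.D → ZMod 3,
      (∑ k, u (W.darts k)) = (L.map u).sum := by
  obtain ⟨e0, e1, e2, e3⟩ := hlink
  refine ⟨⟨L.length, hL, fun k => L.get k, ?_⟩, ?_⟩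
  · intro k
    rcases Nat.lt_or_ge (k.val + 1) L.length with h1 | h1
    · have hnext : cyclicNext hL k = ⟨k.val + 1, h1⟩ := by
        unfold cyclicNext
        exact Fin.ext (Nat.mod_eq_of_lt h1)
      rw [hnext]
      exact e3 k.val h1
    · have hke : k.val + 1 = L.length := by omega
      have hnext : cyclicNext hL k = ⟨0, hL⟩ := by
        unfold cyclicNext
        refine Fin.ext ?_
        show (k.val + 1) % L.length = 0
        rw [hke, Nat.mod_self]
      rw [hnext]
      have hk : L.get k = L[L.length - 1]'(by omega) := by
        show L[k.val] = _
        congr 1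
        omega
      show M.σ.SameCycle (M.α (L.get k)) (L[0]'hL)
      rw [hk]
      exact (e2 hL).trans (e1 hL)
  · intro u
    show (∑ k : Fin L.length, u (L.get k)) = _
    conv_rhs => rw [← List.ofFn_get L]
    rw [List.map_ofFn, List.sum_ofFn]
    rfl


/-! ### Schnyder labelling patterns -/

lemma zmod3_ne_add_one : ∀ x : ZMod 3, ¬ (x = x + 1) := by decide

lemma pattern_aux (t a b c e : ZMod 3) (ha : a = 0 ∨ a = 1) (hb : b = 0 ∨ b = 1)
    (hc : c = 0 ∨ c = 1) (he : e = 0 ∨ e = 1) (hsum : e + b + a + c = 0) :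
    edgePattern ![t, t+a, t+a+b, t-e] := by
  rcases ha with rfl | rfl <;> rcases hb with rfl | rfl <;>
    rcases hc with rfl | rfl <;> rcases he with rfl | rfl <;>
      first
        | exact absurd hsum (by decide)
        | (clear hsum; revert t; unfold edgePattern; decide)

lemma pattern_cons (w x y z : ZMod 3) (h : edgePattern ![w, x, y, z]) :
    (w = z ∨ w = z + 1) ∧ (x = w ∨ x = w + 1) := by
  have h3 : (3 : ZMod 3) = 0 := by decide
  rcases h with h | ⟨i, j, h0, h1, h2, h3'⟩
  · have e1 : x = w := h 1
    have e2 : z = w := h 3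
    exact ⟨Or.inl e2.symm, Or.inl e1⟩
  · fin_cases j
    · -- j = 0 : w = i-1, x = i, y = i, z = i+1
      have hw : w = i - 1 := h0
      have hx : x = i := h1
      have hz : z = i + 1 := h3'
      constructor
      · right; rw [hw, hz]; linear_combination -h3
      · right; rw [hw, hx]; linear_combination 0 * h3
    · -- j = 1 : x = i-1, y = i, z = i, w = i+1
      have hx : x = i - 1 := h0
      have hz : z = i := h2
      have hw : w = i + 1 := h3'
      constructor
      · right; rw [hw, hz]
      · right; rw [hw, hx]; linear_combination -h3
    · -- j = 2 : y = i-1, z = i, w = i, x = i+1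
      have hy : y = i - 1 := h0
      have hz : z = i := h1
      have hw : w = i := h2
      have hx : x = i + 1 := h3'
      constructor
      · left; rw [hw, hz]
      · right; rw [hw, hx]
    · -- j = 3 : z = i-1, w = i, x = i, y = i+1
      have hz : z = i - 1 := h0
      have hw : w = i := h1
      have hx : x = i := h2
      constructor
      · right; rw [hw, hz]; linear_combination 0 * h3
      · left; rw [hw, hx]

/-! ### Construction of the labelling (backward direction) -/

lemma backward
    (Hv : ∀ d0, ∑ d ∈ univ.filter (M.σ.SameCycle d0 ·), eps M o d = 0)
    (He : ∀ d, eps M o d + eps M o (M.α d) + eta M o d + eta M o (M.α d) = 0)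
    (Hwalk : ∀ W : M.ClosedWalk, ∑ k, hfn M o (W.darts k) = 0) :
    M.IsSchnyderOrientation o := by
  rcases isEmpty_or_nonempty M.D with hD | hD
  · refine ⟨fun _ => 0, fun d => hD.elim d, ?_⟩
    funext x
    exact hD.elim x.1
  · obtain ⟨d0⟩ := hD
    have loop_zero : ∀ {x : M.D} {w : ZMod 3} {L : List M.D},
        Chain M o x x w L → w = 0 := by
      intro x w L h
      have hw := chain_weight M o Hv h
      rcases List.eq_nil_or_concat L with rfl | hne
      · simpa using hw
      · have hL : 0 < L.length := by
          rcases hne with ⟨l', a, rfl⟩; simp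
        obtain ⟨W, hWsum⟩ := exists_walk M (chain_linked M o h) hL
        rw [hw, ← hWsum (hfn M o), Hwalk W]
        ring
    have uniq : ∀ {x : M.D} {w w' : ZMod 3} {L L' : List M.D},
        Chain M o d0 x w L → Chain M o d0 x w' L' → w' = w := by
      intro x w w' L L' h1 h2
      obtain ⟨L'', h1'⟩ := chain_symm M o He h1
      have h3 := chain_trans M o h1' h2
      have h4 := loop_zero h3
      linear_combination h4
    have total : ∀ d, ∃ w, ∃ L, Chain M o d0 d w L := fun d => chain_total M o He d0 d
    set lab : M.D → ZMod 3 := fun d => (total d).choose with hlabdef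
    have hlab : ∀ d, ∃ L, Chain M o d0 d (lab d) L := fun d => (total d).choose_spec
    have stepS_lab : ∀ x, lab (M.σ x) = lab x + eps M o (M.σ x) := by
      intro x
      obtain ⟨L, hL⟩ := hlab x
      obtain ⟨L', hL'⟩ := hlab (M.σ x)
      exact uniq hL.stepS hL'
    have stepA_lab : ∀ x, lab (M.α x) = lab x + eta M o x + eps M o (M.α x) := by
      intro x
      obtain ⟨L, hL⟩ := hlab x
      obtain ⟨L', hL'⟩ := hlab (M.α x)
      exact uniq hL.stepA hL'
    have inv_lab : ∀ x, lab x = lab (M.σ⁻¹ x) + eps M o x := by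
      intro x
      have := stepS_lab (M.σ⁻¹ x)
      rwa [Equiv.Perm.apply_inv_self] at this
    have face_lab : ∀ x, lab (M.σ⁻¹ (M.α x)) = lab x + eta M o x := by
      intro x
      have h1 := stepA_lab x
      have h2 := inv_lab (M.α x)
      rw [h2] at h1
      linear_combination h1
    have heps01 : ∀ d, eps M o d = 0 ∨ eps M o d = 1 := by
      intro d
      unfold eps
      by_cases h : o (d, false) = true <;> simp [h]
    have heta01 : ∀ d, eta M o d = 0 ∨ eta M o d = 1 := by
      intro d
      unfold eta
      by_cases h : o (d, true) = true <;> simp [h]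
    refine ⟨lab, ?_, ?_⟩
    · intro d
      show edgePattern ![lab d, lab (M.σ⁻¹ (M.α d)), lab (M.α d), lab (M.σ⁻¹ d)]
      have e1 := face_lab d
      have e2 := stepA_lab d
      have e3 : lab (M.σ⁻¹ d) = lab d - eps M o d := by
        have := inv_lab d
        linear_combination -this
      rw [e1, e2, e3]
      have hpat := pattern_aux (lab d) (eta M o d) (eps M o (M.α d)) (eta M o (M.α d))
        (eps M o d) (heta01 d) (heps01 (M.α d)) (heta01 (M.α d)) (heps01 d)
        (by linear_combination He d)
      have hre : (![lab d, lab d + eta M o d,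
            lab d + eta M o d + eps M o (M.α d), lab d - eps M o d] : Fin 4 → ZMod 3)
          = ![lab d, lab d + eta M o d,
            lab d + eta M o d + eps M o (M.α d), lab d - eps M o d] := rfl
      exact hpat
    · funext x
      rcases x with ⟨d, bb⟩
      cases bb
      · show o (d, false) = M.labOrientation lab (d, false)
        unfold CombMap.labOrientation
        simp only [if_true, reduceIte]
        by_cases hod : o (d, false) = true
        · have he1 : eps M o d = 1 := by unfold eps; simp [hod]
          have : lab d = lab (M.σ⁻¹ d) + 1 := by
            rw [inv_lab d, he1]
          rw [if_pos this, hod]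
        · have hod' : o (d, false) = false := by
            cases hcase : o (d, false)
            · rfl
            · exact absurd hcase hod
          have he1 : eps M o d = 0 := by unfold eps; simp [hod]
          have hld : lab d = lab (M.σ⁻¹ d) := by
            rw [inv_lab d, he1, add_zero]
          rw [if_neg, hod']
          rw [hld]
          exact zmod3_ne_add_one _
      · show o (d, true) = M.labOrientation lab (d, true)
        unfold CombMap.labOrientation
        simp only [Bool.true_eq_false, if_false, reduceIte]
        have hfp : M.facePerm d = M.σ⁻¹ (M.α d) := rfl
        by_cases hod : o (d, true) = true
        · have he1 : eta M o d = 1 := by unfold eta; simp [hod]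
          have : lab (M.facePerm d) = lab d + 1 := by
            rw [hfp, face_lab d, he1]
          rw [if_pos this, hod]
        · have hod' : o (d, true) = false := by
            cases hcase : o (d, true)
            · rfl
            · exact absurd hcase hod
          have he1 : eta M o d = 0 := by unfold eta; simp [hod]
          have hld : lab (M.facePerm d) = lab d := by
            rw [hfp, face_lab d, he1, add_zero]
          rw [if_neg, hod']
          rw [hld]
          intro hcon
          exact zmod3_ne_add_one (lab d) hcon

/-! ### Forward direction: telescoping -/

lemma fwd_walk_sum
    (Hv : ∀ d0, ∑ d ∈ univ.filter (M.σ.SameCycle d0 ·), eps M o d = 0)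
    (lab : M.D → ZMod 3)
    (hepsd : ∀ d, eps M o d = lab d - lab (M.σ⁻¹ d))
    (hetad : ∀ d, eta M o d = lab (M.facePerm d) - lab d)
    (C : M.ClosedWalk) : ∑ k, hfn M o (C.darts k) = 0 := by
  set u : M.D → ZMod 3 := fun d => lab d - S M o d with hudef
  have hu : ∀ x, u (M.σ x) = u x := by
    intro x
    show lab (M.σ x) - S M o (M.σ x) = lab x - S M o x
    rw [S_step M o Hv]
    have h1 := hepsd (M.σ x)
    rw [Equiv.Perm.inv_apply_self] at h1
    linear_combination -h1
  have hu' : ∀ x, u (M.σ⁻¹ x) = u x := by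
    intro x
    have := hu (M.σ⁻¹ x)
    rw [Equiv.Perm.apply_inv_self] at this
    exact this.symm
  have huz : ∀ (i : ℤ) (x : M.D), u ((M.σ ^ i) x) = u x := by
    intro i
    induction i using Int.induction_on with
    | zero => intro x; simp
    | succ j ih =>
        intro x
        have h1 : (M.σ ^ ((j : ℤ) + 1)) x = (M.σ ^ (j : ℤ)) (M.σ x) := by
          rw [zpow_add_one, Equiv.Perm.mul_apply]
        rw [h1, ih (M.σ x), hu]
    | pred j ih =>
        intro x
        have h1 : (M.σ ^ (-(j : ℤ) - 1)) x = (M.σ ^ (-(j:ℤ))) (M.σ⁻¹ x) := by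
          rw [zpow_sub_one, Equiv.Perm.mul_apply]
        rw [h1, ih (M.σ⁻¹ x), hu']
  have huSC : ∀ {x y : M.D}, M.σ.SameCycle x y → u x = u y := by
    rintro x y ⟨i, rfl⟩
    exact (huz i x).symm
  have hform : ∀ d, hfn M o d = u (M.α d) - u d := by
    intro d
    have hr : M.σ⁻¹ (M.α d) = M.facePerm d := rfl
    show eta M o d + eps M o (M.α d) + S M o d - S M o (M.α d) = _
    rw [hetad d, hepsd (M.α d), hr]
    show _ = (lab (M.α d) - S M o (M.α d)) - (lab d - S M o d)
    ring
  rw [Finset.sum_congr rfl (fun k _ => hform (C.darts k))]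
  rw [Finset.sum_sub_distrib]
  have hnext : ∀ k, u (M.α (C.darts k)) = u (C.darts (cyclicNext C.pos k)) :=
    fun k => huSC (C.chain k)
  rw [Finset.sum_congr rfl (fun k _ => hnext k)]
  rw [SAux.sum_next C.pos (fun k => u (C.darts k))]
  ring

end SP

/-- Let `G` be a map on an orientable surface of genus `g`
and let `B₁, …, B₂g` be a set of cycles of `G` forming a homology-basis.  An
orientation of the primal–dual completion `Ĝ` is a Schnyder orientation if and
only if it is a `mod₃`-orientation such that `γ(Bᵢ) ≡ 0 (mod 3)` for all `i`. -/
theorem schnyder_orientation_characterization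
    (M : CombMap) (g : ℕ) (hgenus : M.eulerChar = 2 - 2 * (g : ℤ))
    (hloop : M.NoContractibleLoop) (hmulti : M.NoHomotopicMultiEdges)
    (B : Fin (2 * g) → M.ClosedWalk) (hBc : ∀ i, (B i).IsCycle)
    (hB : IsHomologyBasis M.σ M.α B)
    (o : M.D × Bool → Bool) :
    M.IsSchnyderOrientation o ↔
      M.IsMod3Orientation o ∧ ∀ i, (3 : ℤ) ∣ M.gammaPDC o (B i) := by
  constructor
  · rintro ⟨lab, hlab, rfl⟩
    have hcondF : ∀ d, M.labOrientation lab (d, false)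
        = (if lab d = lab (M.σ⁻¹ d) + 1 then true else false) := fun d => rfl
    have hcondT : ∀ d, M.labOrientation lab (d, true)
        = (if lab (M.facePerm d) = lab d + 1 then true else false) := fun d => rfl
    have hdiff1 : ∀ d, lab d = lab (M.σ⁻¹ d) ∨ lab d = lab (M.σ⁻¹ d) + 1 := by
      intro d
      have h := hlab d
      unfold EdgeCond at h
      exact (SP.pattern_cons _ _ _ _ h).1
    have hdiff2 : ∀ d, lab (M.facePerm d) = lab d ∨ lab (M.facePerm d) = lab d + 1 := by
      intro d
      have h := hlab d
      unfold EdgeCond at h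
      exact (SP.pattern_cons _ _ _ _ h).2
    have htt : (if (true:Bool) = true then (1:ZMod 3) else 0) = 1 := rfl
    have hff : (if (false:Bool) = true then (1:ZMod 3) else 0) = 0 := rfl
    have hepsd : ∀ d, SP.eps M (M.labOrientation lab) d = lab d - lab (M.σ⁻¹ d) := by
      intro d
      unfold SP.eps
      rw [hcondF d]
      by_cases hc : lab d = lab (M.σ⁻¹ d) + 1
      · rw [if_pos hc, htt]
        linear_combination -hc
      · rw [if_neg hc, hff]
        rcases hdiff1 d with h1 | h1
        · linear_combination -h1
        · exact absurd h1 hc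
    have hetad : ∀ d, SP.eta M (M.labOrientation lab) d
        = lab (M.facePerm d) - lab d := by
      intro d
      unfold SP.eta
      rw [hcondT d]
      by_cases hc : lab (M.facePerm d) = lab d + 1
      · rw [if_pos hc, htt]
        linear_combination -hc
      · rw [if_neg hc, hff]
        rcases hdiff2 d with h1 | h1
        · linear_combination -h1
        · exact absurd h1 hc
    have Hv : ∀ d0, ∑ d ∈ Finset.univ.filter (M.σ.SameCycle d0 ·),
        SP.eps M (M.labOrientation lab) d = 0 := by
      intro d0
      rw [Finset.sum_congr rfl (fun d _ => hepsd d), Finset.sum_sub_distrib]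
      have h1 := SAux.orbit_reindex M.σ d0 (fun z => lab (M.σ⁻¹ z))
      simp only [Equiv.Perm.inv_apply_self] at h1
      rw [← h1]
      exact sub_self _
    have Hf : ∀ d0, ∑ d ∈ Finset.univ.filter (M.facePerm.SameCycle d0 ·),
        SP.eta M (M.labOrientation lab) d = 0 := by
      intro d0
      rw [Finset.sum_congr rfl (fun d _ => hetad d), Finset.sum_sub_distrib]
      have h1 := SAux.orbit_reindex M.facePerm d0 lab
      rw [h1]
      exact sub_self _
    have He : ∀ d, SP.eps M (M.labOrientation lab) d
        + SP.eps M (M.labOrientation lab) (M.α d)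
        + SP.eta M (M.labOrientation lab) d
        + SP.eta M (M.labOrientation lab) (M.α d) = 0 := by
      intro d
      have hr1 : M.facePerm d = M.σ⁻¹ (M.α d) := rfl
      have hr2 : M.facePerm (M.α d) = M.σ⁻¹ d := by
        show M.σ⁻¹ (M.α (M.α d)) = M.σ⁻¹ d
        rw [M.α_invol]
      rw [hepsd, hepsd, hetad, hetad, hr1, hr2]
      ring
    refine ⟨⟨?_, ?_, ?_⟩, ?_⟩
    · intro d0
      have h := SP.outdegP_cast M (M.labOrientation lab) d0
      rw [Hv d0] at h
      exact (ZMod.natCast_eq_zero_iff _ 3).mp h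
    · intro d0
      have h := SP.outdegD_cast M (M.labOrientation lab) d0
      rw [Hf d0] at h
      exact (ZMod.natCast_eq_zero_iff _ 3).mp h
    · intro d0
      have he := He d0
      unfold CombMap.outdegEdge
      unfold SP.eps SP.eta at he
      cases hb1 : M.labOrientation lab (d0, false) <;>
        cases hb2 : M.labOrientation lab (M.α d0, false) <;>
        cases hb3 : M.labOrientation lab (d0, true) <;>
        cases hb4 : M.labOrientation lab (M.α d0, true) <;>
        rw [hb1, hb2, hb3, hb4] at he <;>
        first
          | exact absurd he (by decide)
          | decide
    · intro i
      have h1 := SP.gamma_cast M (M.labOrientation lab) Hv He (B i)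
      have h2 := SP.fwd_walk_sum M (M.labOrientation lab) Hv lab hepsd hetad (B i)
      rw [h2, mul_zero] at h1
      have h3 := (ZMod.intCast_zmod_eq_zero_iff_dvd
        (M.gammaPDC (M.labOrientation lab) (B i)) 3).mp h1
      exact_mod_cast h3
  · rintro ⟨⟨h1, h2, h3⟩, hγ⟩
    have Hv : ∀ d0, ∑ d ∈ Finset.univ.filter (M.σ.SameCycle d0 ·),
        SP.eps M o d = 0 := by
      intro d0
      have h := (ZMod.natCast_eq_zero_iff (M.outdegPrimal o d0) 3).mpr (h1 d0)
      rwa [SP.outdegP_cast] at h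
    have Hf : ∀ d0, ∑ d ∈ Finset.univ.filter (M.facePerm.SameCycle d0 ·),
        SP.eta M o d = 0 := by
      intro d0
      have h := (ZMod.natCast_eq_zero_iff (M.outdegDual o d0) 3).mpr (h2 d0)
      rwa [SP.outdegD_cast] at h
    have He : ∀ d, SP.eps M o d + SP.eps M o (M.α d)
        + SP.eta M o d + SP.eta M o (M.α d) = 0 := by
      intro d
      have he := h3 d
      unfold CombMap.outdegEdge at he
      unfold SP.eps SP.eta
      cases hb1 : o (d, false) <;> cases hb2 : o (M.α d, false) <;>
        cases hb3 : o (d, true) <;> cases hb4 : o (M.α d, true) <;>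
        rw [hb1, hb2, hb3, hb4] at he <;>
        first
          | exact absurd he (by decide)
          | decide
    have HwB : ∀ i, SP.Lam M o ((B i).flow) = 0 := by
      intro i
      have hg := SP.gamma_cast M o Hv He (B i)
      have h0 : ((M.gammaPDC o (B i) : ℤ) : ZMod 3) = 0 := by
        rw [ZMod.intCast_zmod_eq_zero_iff_dvd]
        exact_mod_cast hγ i
      show (∑ d, (((B i).flow d : ℤ) : ZMod 3) * SP.hfn M o d) = 0
      rw [SP.flow_pair M o Hv He (B i), ← hg]
      exact h0
    have Hwalk : ∀ W : M.ClosedWalk, ∑ k, SP.hfn M o (W.darts k) = 0 := by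
      intro W
      obtain ⟨μ, hμ⟩ := hB W
      have hL0 : SP.Lam M o (W.flow) = 0 := by
        have hdd := SP.lam_facial M o Hv Hf He hμ
        have hsplit : W.flow = (W.flow - ∑ i, μ i • (B i).flow)
            + (∑ i, μ i • (B i).flow) := (sub_add_cancel _ _).symm
        rw [hsplit, map_add, hdd, zero_add, map_sum]
        refine Finset.sum_eq_zero fun i _ => ?_
        rw [map_zsmul, HwB i, smul_zero]
      have hfp := SP.flow_pair M o Hv He W
      have e0 : (0 : ZMod 3) = 2 * ∑ k, SP.hfn M o (W.darts k) := by
        calc (0 : ZMod 3) = SP.Lam M o W.flow := hL0.symm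
          _ = ∑ d, ((W.flow d : ℤ) : ZMod 3) * SP.hfn M o d := rfl
          _ = 2 * ∑ k, SP.hfn M o (W.darts k) := hfp
      have e2 : (2:ZMod 3) * ((2:ZMod 3) * ∑ k, SP.hfn M o (W.darts k))
          = ∑ k, SP.hfn M o (W.darts k) := by
        rw [← mul_assoc]
        have h22 : (2:ZMod 3) * 2 = 1 := by decide
        rw [h22, one_mul]
      calc ∑ k, SP.hfn M o (W.darts k)
          = 2 * (2 * ∑ k, SP.hfn M o (W.darts k)) := e2.symm
        _ = 2 * 0 := by rw [← e0]
        _ = 0 := mul_zero 2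
    exact SP.backward M o Hv He Hwalk

end Schnyder
end
end
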